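/- arXiv:1106.3809 — 11 statements merged into one kernel-verified Lean document; each statement's English description precedes it below -/
import Mathlib

section
/- Let B be a column-stochastic sampling matrix such that the upper-triangular submatrix B̃ is invertible and d_j > 0 for all 0 ≤ j ≤ W. Then the Fisher information matrix J(θ) = (1/d₀)·b₀b₀ᵀ + J̃(θ) is invertible, and its inverse is J(θ)⁻¹ = J̃(θ)⁻¹ − (d₀ + b₀ᵀ J̃(θ)⁻¹ b₀)⁻¹ · J̃(θ)⁻¹ b₀ b₀ᵀ J̃(θ)⁻¹, where J̃(θ)⁻¹ = B̃⁻¹ diag(d₁,…,d_W) (B̃⁻¹)ᵀ. -/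
open Matrix

private lemma mul_vmv {n : Type*} [Fintype n] [DecidableEq n] (A : Matrix n n ℝ) (u v : n → ℝ) :
    A * vecMulVec u v = vecMulVec (A *ᵥ u) v := by
  ext i j; simp [mul_apply, vecMulVec_apply, mulVec, dotProduct, Finset.sum_mul, mul_assoc]

private lemma vmv_mul {n : Type*} [Fintype n] [DecidableEq n] (A : Matrix n n ℝ) (u v : n → ℝ) :
    vecMulVec u v * A = vecMulVec u (v ᵥ* A) := by
  ext i j; simp [mul_apply, vecMulVec_apply, vecMul, dotProduct, Finset.mul_sum, mul_assoc]

private lemma vmv_mul_vmv {n : Type*} [Fintype n] [DecidableEq n] (u v x y : n → ℝ) :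
    vecMulVec u v * vecMulVec x y = (v ⬝ᵥ x) • vecMulVec u y := by
  ext i j
  simp only [mul_apply, vecMulVec_apply, dotProduct, Matrix.smul_apply, smul_eq_mul, Finset.sum_mul]
  exact Finset.sum_congr rfl fun k _ => by ring

/-- For a column-stochastic sampling matrix `B` with invertible
upper-triangular part `B̃` and positive sampled-flow probabilities `d`, the Fisher
information `J(θ) = (1/d₀)·b₀b₀ᵀ + J̃(θ)` is invertible, with inverse
`J⁻¹ = J̃⁻¹ − (d₀ + b₀ᵀ J̃⁻¹ b₀)⁻¹ · J̃⁻¹ b₀ b₀ᵀ J̃⁻¹`,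
where `J̃⁻¹ = B̃⁻¹ diag(d₁,…,d_W) (B̃⁻¹)ᵀ`. Rows of `B` are indexed by
`j : Fin (W+1)` (sampled size `j`), columns by `k : Fin W` (original size `k+1`). -/
theorem stmt_0 (W : ℕ) (hW : 1 ≤ W)
    (θ : Fin W → ℝ) (hθpos : ∀ k, 0 < θ k) (hθsum : ∑ k, θ k = 1)
    (B : Matrix (Fin (W + 1)) (Fin W) ℝ)
    (hBnonneg : ∀ j k, 0 ≤ B j k)
    (hBtri : ∀ (j : Fin (W + 1)) (k : Fin W), (k : ℕ) + 1 < (j : ℕ) → B j k = 0)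
    (hBcol : ∀ k, ∑ j, B j k = 1)
    (Bt : Matrix (Fin W) (Fin W) ℝ) (hBt : ∀ j k, Bt j k = B j.succ k)
    (hBtinv : IsUnit Bt.det)
    (b0 : Fin W → ℝ) (hb0 : ∀ k, b0 k = B 0 k)
    (d : Fin (W + 1) → ℝ) (hd : d = B *ᵥ θ)
    (hdpos : ∀ j, 0 < d j)
    (J Jt : Matrix (Fin W) (Fin W) ℝ)
    (hJ : J = Bᵀ * Matrix.diagonal (fun j => (d j)⁻¹) * B)
    (hJt : Jt = Btᵀ * Matrix.diagonal (fun j : Fin W => (d j.succ)⁻¹) * Bt) :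
    J = (d 0)⁻¹ • Matrix.vecMulVec b0 b0 + Jt ∧
    IsUnit J.det ∧
    Jt⁻¹ = Bt⁻¹ * Matrix.diagonal (fun j : Fin W => d j.succ) * (Bt⁻¹)ᵀ ∧
    J⁻¹ = Jt⁻¹ - (d 0 + b0 ⬝ᵥ (Jt⁻¹ *ᵥ b0))⁻¹ •
      Matrix.vecMulVec (Jt⁻¹ *ᵥ b0) (b0 ᵥ* Jt⁻¹) := by
  -- Part 1: decomposition
  have hJel : ∀ i j, J i j = ∑ l, B l i * (d l)⁻¹ * B l j := by
    intro i j
    rw [hJ, Matrix.mul_apply]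
    simp only [Matrix.mul_diagonal, Matrix.transpose_apply]
  have hJtel : ∀ i j, Jt i j = ∑ l : Fin W, B l.succ i * (d l.succ)⁻¹ * B l.succ j := by
    intro i j
    rw [hJt, Matrix.mul_apply]
    simp only [Matrix.mul_diagonal, Matrix.transpose_apply, hBt]
  have hdec : J = (d 0)⁻¹ • Matrix.vecMulVec b0 b0 + Jt := by
    ext i j
    rw [hJel, Fin.sum_univ_succ]
    simp only [Matrix.add_apply, Matrix.smul_apply, vecMulVec_apply, smul_eq_mul,
      hJtel, hb0]
    ring
  -- Invertibility of Jt
  have hJtdet : IsUnit Jt.det := by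
    rw [hJt, det_mul, det_mul, det_transpose, det_diagonal]
    refine (hBtinv.mul (isUnit_iff_ne_zero.2 ?_)).mul hBtinv
    exact Finset.prod_ne_zero_iff.2 fun j _ => inv_ne_zero (hdpos j.succ).ne'
  -- Jt⁻¹ formula
  have hJtinv : Jt⁻¹ = Bt⁻¹ * Matrix.diagonal (fun j : Fin W => d j.succ) * (Bt⁻¹)ᵀ := by
    have hdiaginv : (Matrix.diagonal fun j : Fin W => (d j.succ)⁻¹)⁻¹
        = Matrix.diagonal (fun j : Fin W => d j.succ) := by
      apply Matrix.inv_eq_right_inv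
      rw [Matrix.diagonal_mul_diagonal, ← Matrix.diagonal_one]
      have h2 : (fun j : Fin W => (d j.succ)⁻¹ * d j.succ) = fun _ : Fin W => (1 : ℝ) :=
        funext fun j => inv_mul_cancel₀ (hdpos j.succ).ne'
      rw [h2]
    rw [hJt, Matrix.mul_inv_rev, Matrix.mul_inv_rev, hdiaginv,
      Matrix.transpose_nonsing_inv, Matrix.mul_assoc]
  have hJtJt : Jt * Jt⁻¹ = 1 := Matrix.mul_nonsing_inv _ hJtdet
  -- positivity of the scalar
  set s : ℝ := b0 ⬝ᵥ (Jt⁻¹ *ᵥ b0) with hs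
  have hsnn : 0 ≤ s := by
    set y : Fin W → ℝ := (Bt⁻¹)ᵀ *ᵥ b0 with hy
    have hyv : b0 ᵥ* Bt⁻¹ = y := by rw [hy, Matrix.mulVec_transpose]
    have hdiag : (Matrix.diagonal (fun j : Fin W => d j.succ)) *ᵥ y
        = fun i => d i.succ * y i := by
      funext i; simp [Matrix.mulVec_diagonal]
    have : s = ∑ i, y i * (d i.succ * y i) := by
      rw [hs, hJtinv, Matrix.mul_assoc, ← Matrix.mulVec_mulVec, ← Matrix.mulVec_mulVec,
        Matrix.dotProduct_mulVec, hyv, ← hy, hdiag]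
      rfl
    rw [this]
    refine Finset.sum_nonneg fun i _ => ?_
    have := sq_nonneg (y i)
    nlinarith [(hdpos i.succ).le]
  set c : ℝ := d 0 + s with hc
  have hd0 : d 0 ≠ 0 := (hdpos 0).ne'
  have hcpos : 0 < c := add_pos_of_pos_of_nonneg (hdpos 0) hsnn
  have hcne : c ≠ 0 := hcpos.ne'
  set u : Fin W → ℝ := Jt⁻¹ *ᵥ b0 with hu
  set v : Fin W → ℝ := b0 ᵥ* Jt⁻¹ with hv
  have hJtu : Jt *ᵥ u = b0 := by
    rw [hu, Matrix.mulVec_mulVec, hJtJt, Matrix.one_mulVec]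
  set M : Matrix (Fin W) (Fin W) ℝ := Jt⁻¹ - c⁻¹ • Matrix.vecMulVec u v with hM
  have e1 : vecMulVec b0 b0 * Jt⁻¹ = vecMulVec b0 v := by rw [vmv_mul]
  have e2 : vecMulVec b0 b0 * vecMulVec u v = s • vecMulVec b0 v := by
    rw [vmv_mul_vmv, ← hs]
  have e3 : Jt * vecMulVec u v = vecMulVec b0 v := by rw [mul_vmv, hJtu]
  have key : (d 0)⁻¹ - (d 0)⁻¹ * (c⁻¹ * s) - c⁻¹ = 0 := by
    field_simp
    rw [hc]; ring
  have hJM : J * M = 1 := by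
    rw [hdec, hM, add_mul, mul_sub, mul_sub, Matrix.smul_mul, Matrix.smul_mul,
      Matrix.mul_smul, Matrix.mul_smul, e1, e2, e3, hJtJt]
    have expand : (d 0)⁻¹ • vecMulVec b0 v - (d 0)⁻¹ • c⁻¹ • s • vecMulVec b0 v +
        (1 - c⁻¹ • vecMulVec b0 v)
        = ((d 0)⁻¹ - (d 0)⁻¹ * (c⁻¹ * s) - c⁻¹) • vecMulVec b0 v + 1 := by
      module
    rw [expand, key, zero_smul, zero_add]
  refine ⟨hdec, Matrix.isUnit_det_of_right_inverse hJM, hJtinv, ?_⟩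
  rw [Matrix.inv_eq_right_inv hJM]
end

section
/- Let B be a column-stochastic sampling matrix with B̃ invertible and d_j > 0 for all 0 ≤ j ≤ W, and suppose the top row of B is constant: b₀ = q·𝟙_W for some constant q with 0 ≤ q < 1. Set p = 1 − q. Then J(θ)⁻¹ = J̃(θ)⁻¹ − (q/p)·θθᵀ. -/
open Matrix

section Aux

variable {W : ℕ}

lemma aux_mul_vmv (A : Matrix (Fin W) (Fin W) ℝ) (a b : Fin W → ℝ) :
    A * Matrix.vecMulVec a b = Matrix.vecMulVec (A *ᵥ a) b := by
  ext i j
  simp [Matrix.mul_apply, Matrix.vecMulVec_apply, Matrix.mulVec, dotProduct,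
    Finset.sum_mul, mul_assoc]

lemma aux_vmv_mul (A : Matrix (Fin W) (Fin W) ℝ) (a b : Fin W → ℝ) :
    Matrix.vecMulVec a b * A = Matrix.vecMulVec a (b ᵥ* A) := by
  ext i j
  simp [Matrix.mul_apply, Matrix.vecMulVec_apply, Matrix.vecMul, dotProduct,
    Finset.mul_sum, mul_assoc]

lemma aux_vmv_smul_left (c : ℝ) (a b : Fin W → ℝ) :
    Matrix.vecMulVec (c • a) b = c • Matrix.vecMulVec a b := by
  ext i j
  simp [Matrix.vecMulVec_apply, mul_assoc]

end Aux

/-- If the top row of a column-stochastic sampling matrix `B` is the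
constant `q` with `0 ≤ q < 1`, then with `p = 1 − q` we have
`J(θ)⁻¹ = J̃(θ)⁻¹ − (q/p)·θθᵀ`. Rows of `B` are indexed by `j : Fin (W+1)`
(sampled size `j`), columns by `k : Fin W` (original size `k+1`). -/
theorem stmt_1 (W : ℕ) (hW : 1 ≤ W)
    (θ : Fin W → ℝ) (hθpos : ∀ k, 0 < θ k) (hθsum : ∑ k, θ k = 1)
    (B : Matrix (Fin (W + 1)) (Fin W) ℝ)
    (hBnonneg : ∀ j k, 0 ≤ B j k)
    (hBtri : ∀ (j : Fin (W + 1)) (k : Fin W), (k : ℕ) + 1 < (j : ℕ) → B j k = 0)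
    (hBcol : ∀ k, ∑ j, B j k = 1)
    (Bt : Matrix (Fin W) (Fin W) ℝ) (hBt : ∀ j k, Bt j k = B j.succ k)
    (hBtinv : IsUnit Bt.det)
    (q p : ℝ) (hq0 : 0 ≤ q) (hq1 : q < 1) (hp : p = 1 - q)
    (hb0 : ∀ k, B 0 k = q)
    (d : Fin (W + 1) → ℝ) (hd : d = B *ᵥ θ)
    (hdpos : ∀ j, 0 < d j)
    (J Jt : Matrix (Fin W) (Fin W) ℝ)
    (hJ : J = Bᵀ * Matrix.diagonal (fun j => (d j)⁻¹) * B)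
    (hJt : Jt = Btᵀ * Matrix.diagonal (fun j : Fin W => (d j.succ)⁻¹) * Bt) :
    J⁻¹ = Jt⁻¹ - (q / p) • Matrix.vecMulVec θ θ := by
  have hp0 : 0 < p := by rw [hp]; linarith
  -- d 0 = q
  have hd0 : d 0 = q := by
    rw [hd]
    simp only [Matrix.mulVec, dotProduct, hb0]
    rw [← Finset.mul_sum, hθsum, mul_one]
  have hqpos : 0 < q := hd0 ▸ hdpos 0
  set u : Fin W → ℝ := fun _ => (1 : ℝ) with hu
  -- entries of J and Jt
  have hJentry : ∀ k l, J k l = ∑ j, B j k * (d j)⁻¹ * B j l := by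
    intro k l
    rw [hJ, Matrix.mul_assoc]
    simp only [Matrix.mul_apply, Matrix.transpose_apply, Matrix.diagonal_apply, ite_mul,
      zero_mul, Finset.sum_ite_eq, Finset.mem_univ, if_true]
    exact Finset.sum_congr rfl fun j _ => by ring
  have hJtentry : ∀ k l, Jt k l = ∑ j, Bt j k * (d j.succ)⁻¹ * Bt j l := by
    intro k l
    rw [hJt, Matrix.mul_assoc]
    simp only [Matrix.mul_apply, Matrix.transpose_apply, Matrix.diagonal_apply, ite_mul,
      zero_mul, Finset.sum_ite_eq, Finset.mem_univ, if_true]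
    exact Finset.sum_congr rfl fun j _ => by ring
  -- J = Jt + q • u uᵀ
  have hJsplit : J = Jt + q • Matrix.vecMulVec u u := by
    ext k l
    rw [Matrix.add_apply, Matrix.smul_apply, hJentry, hJtentry, Fin.sum_univ_succ]
    simp only [hb0, hd0, Matrix.vecMulVec_apply, hu, mul_one, smul_eq_mul]
    have hsum : ∑ i : Fin W, B (Fin.succ i) k * (d (Fin.succ i))⁻¹ * B (Fin.succ i) l =
        ∑ j : Fin W, Bt j k * (d j.succ)⁻¹ * Bt j l :=
      Finset.sum_congr rfl fun j _ => by rw [hBt, hBt]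
    rw [hsum, mul_inv_cancel₀ hqpos.ne', one_mul, add_comm]
  -- Bt *ᵥ θ gives d at successors
  have hBtθ : ∀ j : Fin W, ∑ l, Bt j l * θ l = d j.succ := by
    intro j
    rw [hd]
    simp only [Matrix.mulVec, dotProduct]
    exact Finset.sum_congr rfl fun l _ => by rw [hBt]
  -- column sums of Bt
  have hBtcol : ∀ k, ∑ j, Bt j k = p := by
    intro k
    have := hBcol k
    rw [Fin.sum_univ_succ, hb0] at this
    have : ∑ j : Fin W, B (Fin.succ j) k = 1 - q := by linarith
    rw [hp, ← this]
    exact Finset.sum_congr rfl fun j _ => by rw [hBt]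
  -- Jt *ᵥ θ = p • u
  have hJtθ : Jt *ᵥ θ = p • u := by
    ext k
    simp only [Matrix.mulVec, dotProduct, Pi.smul_apply, hu, smul_eq_mul, mul_one]
    calc ∑ l, Jt k l * θ l
        = ∑ l, (∑ j, Bt j k * (d j.succ)⁻¹ * Bt j l) * θ l := by
          exact Finset.sum_congr rfl fun l _ => by rw [hJtentry]
      _ = ∑ j, Bt j k * (d j.succ)⁻¹ * ∑ l, Bt j l * θ l := by
          simp only [Finset.sum_mul, Finset.mul_sum]
          rw [Finset.sum_comm]
          exact Finset.sum_congr rfl fun j _ => Finset.sum_congr rfl fun l _ => by ring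
      _ = ∑ j, Bt j k := by
          refine Finset.sum_congr rfl fun j _ => ?_
          rw [hBtθ j, mul_assoc, inv_mul_cancel₀ (hdpos j.succ).ne', mul_one]
      _ = p := hBtcol k
  -- Jt is invertible
  have hJtdet : IsUnit Jt.det := by
    rw [hJt, Matrix.det_mul, Matrix.det_mul, Matrix.det_transpose, Matrix.det_diagonal]
    refine (hBtinv.mul ?_).mul hBtinv
    rw [isUnit_iff_ne_zero]
    exact Finset.prod_ne_zero_iff.mpr fun j _ => inv_ne_zero (hdpos j.succ).ne'
  have hJtinv : Jt * Jt⁻¹ = 1 := Matrix.mul_nonsing_inv Jt hJtdet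
  -- symmetry of Jt
  have hJtsymm : Jtᵀ = Jt := by
    rw [hJt]
    simp [Matrix.transpose_mul, Matrix.diagonal_transpose, Matrix.mul_assoc]
  -- θ ᵥ* Jt = p • u
  have hθJt : θ ᵥ* Jt = p • u := by
    rw [← hJtsymm, Matrix.vecMul_transpose, hJtθ]
  -- u ᵥ* Jt⁻¹ = p⁻¹ • θ
  have huJinv : u ᵥ* Jt⁻¹ = p⁻¹ • θ := by
    have h1 : u = (p⁻¹ • θ) ᵥ* Jt := by
      rw [Matrix.smul_vecMul, hθJt, smul_smul, inv_mul_cancel₀ hp0.ne', one_smul]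
    rw [h1, Matrix.vecMul_vecMul, hJtinv, Matrix.vecMul_one]
  -- u ᵥ* (θθᵀ) = θ
  have huθθ : u ᵥ* Matrix.vecMulVec θ θ = θ := by
    ext j
    simp only [Matrix.vecMul, dotProduct, Matrix.vecMulVec_apply, hu, one_mul]
    rw [← Finset.sum_mul, hθsum, one_mul]
  -- right inverse computation
  have key : J * (Jt⁻¹ - (q / p) • Matrix.vecMulVec θ θ) = 1 := by
    rw [hJsplit, add_mul, mul_sub, mul_sub, hJtinv]
    rw [Matrix.mul_smul, aux_mul_vmv, hJtθ, aux_vmv_smul_left]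
    rw [Matrix.smul_mul, aux_vmv_mul, huJinv]
    rw [Matrix.smul_mul, Matrix.mul_smul, aux_vmv_mul, huθθ]
    have hveq : Matrix.vecMulVec u (p⁻¹ • θ) = p⁻¹ • Matrix.vecMulVec u θ := by
      ext i j
      simp [Matrix.vecMulVec_apply, mul_comm, mul_assoc, mul_left_comm]
    rw [hveq, smul_smul, smul_smul, smul_smul]
    have e1 : q / p * p = q := div_mul_cancel₀ q hp0.ne'
    have e2 : q * p⁻¹ - q * (q / p) = q := by
      have hne : p ≠ 0 := hp0.ne'
      field_simp
      rw [hp]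
    rw [e1, ← sub_smul, e2]
    abel
  exact Matrix.inv_eq_right_inv key
end

section
/- Let B be a column-stochastic sampling matrix with B̃ invertible and d_j > 0 for all 1 ≤ j ≤ W. Then J̃(θ)⁻¹ − J(θ)⁻¹ is positive semidefinite (i.e., J(θ)⁻¹ ≤ J̃(θ)⁻¹ in the Loewner order), with equality J(θ)⁻¹ = J̃(θ)⁻¹ if and only if b₀ = 0 (no flow can evaporate). (When b₀ = 0 one interprets J(θ) as J̃(θ); otherwise d₀ > 0 and J(θ) is as defined.) -/
open Matrix

-- PSD of a nonneg multiple of an outer product (real case).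
lemma aux_psd_outer {n : Type*} [Fintype n] {c : ℝ} (hc : 0 ≤ c) (u : n → ℝ) :
    (c • vecMulVec u u).PosSemidef := by
  rw [Matrix.posSemidef_iff_dotProduct_mulVec]
  constructor
  · ext j k
    simp [Matrix.conjTranspose_apply, Matrix.vecMulVec_apply, mul_comm]
  · intro x
    have h1 : ∀ j, ((c • vecMulVec u u) *ᵥ x) j = c * u j * (u ⬝ᵥ x) := by
      intro j
      simp only [Matrix.mulVec, dotProduct, Matrix.smul_apply,
        Matrix.vecMulVec_apply, smul_eq_mul, Finset.mul_sum]
      congr 1; ext k; ring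
    have key : star x ⬝ᵥ ((c • vecMulVec u u) *ᵥ x) = c * (∑ i, u i * x i) ^ 2 := by
      simp only [star_trivial, dotProduct, h1]
      have h3 : ∀ j ∈ Finset.univ, x j * (c * u j * (∑ i, u i * x i))
          = (u j * x j) * (c * (∑ i : n, u i * x i)) := fun j _ => by ring
      rw [Finset.sum_congr rfl h3, ← Finset.sum_mul]
      ring
    rw [key]
    positivity

-- Conjugation of a posdef matrix by an invertible matrix (real case, transpose).
lemma aux_posdef_conj {n : Type*} [Fintype n] [DecidableEq n]
    {D C : Matrix n n ℝ} (hD : D.PosDef) (hC : IsUnit C.det) :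
    (Cᵀ * D * C).PosDef := by
  have hC' : IsUnit C := (Matrix.isUnit_iff_isUnit_det C).mpr hC
  have hT : Cᵀ = Cᴴ := by ext i j; simp [Matrix.conjTranspose_apply]
  rw [Matrix.posDef_iff_dotProduct_mulVec]
  constructor
  · rw [hT]
    exact Matrix.isHermitian_conjTranspose_mul_mul C hD.1
  · intro x hx
    have hx' : C *ᵥ x ≠ 0 := by
      intro h
      exact hx ((Matrix.mulVec_injective_iff_isUnit.mpr hC').eq_iff' (by simp) |>.mp h)
    have := hD.dotProduct_mulVec_pos hx'
    rw [hT]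
    simpa only [star_mulVec, dotProduct_mulVec, vecMul_vecMul] using this

-- Anti-monotonicity of inverse on posdef matrices (real case).
lemma aux_inv_anti {n : Type*} [Fintype n] [DecidableEq n]
    {A B : Matrix n n ℝ} (hA : A.PosDef) (hB : B.PosDef)
    (hAB : (B - A).PosSemidef) : (A⁻¹ - B⁻¹).PosSemidef := by
  have hAd : IsUnit A.det := hA.det_pos.ne'.isUnit
  have hBd : IsUnit B.det := hB.det_pos.ne'.isUnit
  have hAA : A⁻¹ * A = 1 := Matrix.nonsing_inv_mul A hAd
  have hAA' : A * A⁻¹ = 1 := Matrix.mul_nonsing_inv A hAd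
  have hBB : B⁻¹ * B = 1 := Matrix.nonsing_inv_mul B hBd
  have hBB' : B * B⁻¹ = 1 := Matrix.mul_nonsing_inv B hBd
  set C := B - A with hC
  have e1 : A⁻¹ - B⁻¹ = B⁻¹ * C * A⁻¹ := by
    have : B⁻¹ * C * A⁻¹ = B⁻¹ * B * A⁻¹ - B⁻¹ * (A * A⁻¹) := by
      rw [hC]; noncomm_ring
    rw [this, hBB, hAA', one_mul, mul_one]
  have e2 : A⁻¹ = B⁻¹ + A⁻¹ * C * B⁻¹ := by
    have : A⁻¹ * C * B⁻¹ = A⁻¹ * (B * B⁻¹) - A⁻¹ * A * B⁻¹ := by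
      rw [hC]; noncomm_ring
    rw [this, hBB', hAA, one_mul, mul_one, add_sub_cancel]
  have e3 : A⁻¹ - B⁻¹ = B⁻¹ * C * B⁻¹ + (C * B⁻¹)ᴴ * A⁻¹ * (C * B⁻¹) := by
    have hCH : Cᴴ = C := hAB.isHermitian
    have hBH : B⁻¹ᴴ = B⁻¹ := hB.inv.isHermitian
    rw [Matrix.conjTranspose_mul, hCH, hBH]
    calc A⁻¹ - B⁻¹ = B⁻¹ * C * A⁻¹ := e1
      _ = B⁻¹ * C * (B⁻¹ + A⁻¹ * C * B⁻¹) := by rw [← e2]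
      _ = B⁻¹ * C * B⁻¹ + B⁻¹ * C * A⁻¹ * (C * B⁻¹) := by noncomm_ring
  have hBH : B⁻¹ᴴ = B⁻¹ := hB.inv.isHermitian
  have t1 : (B⁻¹ * C * B⁻¹).PosSemidef := by
    have := hAB.conjTranspose_mul_mul_same B⁻¹
    rwa [hBH] at this
  have t2 : ((C * B⁻¹)ᴴ * A⁻¹ * (C * B⁻¹)).PosSemidef :=
    hA.inv.posSemidef.conjTranspose_mul_mul_same (C * B⁻¹)
  rw [e3]
  exact t1.add t2

/-- For a column-stochastic sampling matrix `B` with invertible `B̃` and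
`d_j > 0` for `1 ≤ j ≤ W`, the difference `J̃(θ)⁻¹ − J(θ)⁻¹` is positive semidefinite,
with equality `J(θ)⁻¹ = J̃(θ)⁻¹` if and only if `b₀ = 0`. (In Lean `(0:ℝ)⁻¹ = 0`, so the
definition `J = Bᵀ D B` with `D₀₀ = d₀⁻¹` automatically interprets `J(θ)` as `J̃(θ)`
when `b₀ = 0`; otherwise `d₀ > 0` and `J(θ)` is as usual.) -/
theorem stmt_2 (W : ℕ) (hW : 1 ≤ W)
    (θ : Fin W → ℝ) (hθpos : ∀ k, 0 < θ k) (hθsum : ∑ k, θ k = 1)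
    (B : Matrix (Fin (W + 1)) (Fin W) ℝ)
    (hBnonneg : ∀ j k, 0 ≤ B j k)
    (hBtri : ∀ (j : Fin (W + 1)) (k : Fin W), (k : ℕ) + 1 < (j : ℕ) → B j k = 0)
    (hBcol : ∀ k, ∑ j, B j k = 1)
    (Bt : Matrix (Fin W) (Fin W) ℝ) (hBt : ∀ j k, Bt j k = B j.succ k)
    (hBtinv : IsUnit Bt.det)
    (d : Fin (W + 1) → ℝ) (hd : d = B *ᵥ θ)
    (hdpos : ∀ j : Fin W, 0 < d j.succ)
    (J Jt : Matrix (Fin W) (Fin W) ℝ)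
    (hJ : J = Bᵀ * Matrix.diagonal (fun j => (d j)⁻¹) * B)
    (hJt : Jt = Btᵀ * Matrix.diagonal (fun j : Fin W => (d j.succ)⁻¹) * Bt) :
    (Jt⁻¹ - J⁻¹).PosSemidef ∧ (J⁻¹ = Jt⁻¹ ↔ ∀ k, B 0 k = 0) := by
  set u : Fin W → ℝ := fun k => B 0 k with hu
  have hd0 : d 0 = ∑ k, B 0 k * θ k := by
    rw [hd]; simp [Matrix.mulVec, dotProduct]
  have hd0n : 0 ≤ d 0 := by
    rw [hd0]
    exact Finset.sum_nonneg fun k _ => mul_nonneg (hBnonneg 0 k) (hθpos k).le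
  have hc : 0 ≤ (d 0)⁻¹ := inv_nonneg.mpr hd0n
  -- the split J = Jt + c • u uᵀ
  have hJ' : ∀ j k, J j k = ∑ x, B x j * ((d x)⁻¹ * B x k) := by
    intro j k
    rw [hJ, Matrix.mul_assoc, Matrix.mul_apply]
    simp [Matrix.diagonal_mul, Matrix.transpose_apply]
  have hJt' : ∀ j k, Jt j k = ∑ x : Fin W, B x.succ j * ((d x.succ)⁻¹ * B x.succ k) := by
    intro j k
    rw [hJt, Matrix.mul_assoc, Matrix.mul_apply]
    simp [Matrix.diagonal_mul, Matrix.transpose_apply, hBt]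
  have hsplit : J = Jt + (d 0)⁻¹ • vecMulVec u u := by
    ext j k
    rw [Matrix.add_apply, Matrix.smul_apply, Matrix.vecMulVec_apply, hJ' j k, hJt' j k,
      Fin.sum_univ_succ]
    simp only [hu, smul_eq_mul]
    ring
  have hJtpos : Jt.PosDef := by
    rw [hJt]
    exact aux_posdef_conj (Matrix.PosDef.diagonal fun j => inv_pos.mpr (hdpos j)) hBtinv
  have houter : ((d 0)⁻¹ • vecMulVec u u).PosSemidef := aux_psd_outer hc u
  have hJpos : J.PosDef := by
    rw [hsplit]; exact hJtpos.add_posSemidef houter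
  have hdiff : (J - Jt).PosSemidef := by
    rw [hsplit, add_sub_cancel_left]; exact houter
  refine ⟨aux_inv_anti hJtpos hJpos hdiff, ?_, ?_⟩
  · -- J⁻¹ = Jt⁻¹ → b₀ = 0
    intro hinv k
    have hJJt : J = Jt := by
      have h1 : J⁻¹⁻¹ = J := Matrix.nonsing_inv_nonsing_inv J hJpos.det_pos.ne'.isUnit
      have h2 : Jt⁻¹⁻¹ = Jt := Matrix.nonsing_inv_nonsing_inv Jt hJtpos.det_pos.ne'.isUnit
      rw [← h1, ← h2, hinv]
    have hX : (d 0)⁻¹ • vecMulVec u u = 0 := by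
      have := hsplit.symm.trans hJJt
      rwa [add_eq_left] at this
    by_contra hk
    have hBk : 0 < B 0 k := lt_of_le_of_ne (hBnonneg 0 k) (Ne.symm hk)
    have hd0pos : 0 < d 0 := by
      rw [hd0]
      refine lt_of_lt_of_le (mul_pos hBk (hθpos k)) ?_
      exact Finset.single_le_sum (fun j _ => mul_nonneg (hBnonneg 0 j) (hθpos j).le)
        (Finset.mem_univ k)
    have hentry := congrFun (congrFun hX k) k
    simp only [Matrix.smul_apply, Matrix.vecMulVec_apply, Matrix.zero_apply, hu,
      smul_eq_mul] at hentry
    have : 0 < (d 0)⁻¹ * (B 0 k * B 0 k) :=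
      mul_pos (inv_pos.mpr hd0pos) (mul_pos hBk hBk)
    exact this.ne' hentry
  · -- b₀ = 0 → J⁻¹ = Jt⁻¹
    intro h0
    have : vecMulVec u u = 0 := by
      ext j k; simp [Matrix.vecMulVec_apply, hu, h0]
    have : J = Jt := by rw [hsplit, this, smul_zero, add_zero]
    rw [this]
end

section
/- Let B be a column-stochastic sampling matrix with d_j > 0 for all 0 ≤ j ≤ W and J(θ) invertible. Then J(θ)⁻¹ 𝟙_W = θ and 𝟙_Wᵀ J(θ)⁻¹ 𝟙_W = 1. Consequently the correction term in the constrained Cramér–Rao bound simplifies: J(θ)⁻¹ − J(θ)⁻¹𝟙_W (𝟙_Wᵀ J(θ)⁻¹ 𝟙_W)⁻¹ 𝟙_Wᵀ J(θ)⁻¹ = J(θ)⁻¹ − θθᵀ. -/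
open Matrix

/-- For a column-stochastic sampling matrix `B` with `d_j > 0` for all
`j` and invertible `J(θ)`, one has `J(θ)⁻¹ 𝟙_W = θ` and `𝟙ᵀ J⁻¹ 𝟙 = 1`, so the
constrained CRB correction simplifies:
`J⁻¹ − J⁻¹𝟙 (𝟙ᵀJ⁻¹𝟙)⁻¹ 𝟙ᵀJ⁻¹ = J⁻¹ − θθᵀ`. -/
theorem stmt_4 (W : ℕ) (hW : 1 ≤ W)
    (θ : Fin W → ℝ) (hθpos : ∀ k, 0 < θ k) (hθsum : ∑ k, θ k = 1)
    (B : Matrix (Fin (W + 1)) (Fin W) ℝ)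
    (hBnonneg : ∀ j k, 0 ≤ B j k)
    (hBtri : ∀ (j : Fin (W + 1)) (k : Fin W), (k : ℕ) + 1 < (j : ℕ) → B j k = 0)
    (hBcol : ∀ k, ∑ j, B j k = 1)
    (d : Fin (W + 1) → ℝ) (hd : d = B *ᵥ θ)
    (hdpos : ∀ j, 0 < d j)
    (J : Matrix (Fin W) (Fin W) ℝ)
    (hJ : J = Bᵀ * Matrix.diagonal (fun j => (d j)⁻¹) * B)
    (hJinv : IsUnit J.det) :
    J⁻¹ *ᵥ (fun _ => (1 : ℝ)) = θ ∧
    (fun _ => (1 : ℝ)) ⬝ᵥ (J⁻¹ *ᵥ (fun _ => (1 : ℝ))) = 1 ∧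
    J⁻¹ - ((fun _ => (1 : ℝ)) ⬝ᵥ (J⁻¹ *ᵥ (fun _ => (1 : ℝ))))⁻¹ •
        Matrix.vecMulVec (J⁻¹ *ᵥ (fun _ => (1 : ℝ))) ((fun _ => (1 : ℝ)) ᵥ* J⁻¹) =
      J⁻¹ - Matrix.vecMulVec θ θ := by
  have hJθ : J *ᵥ θ = (fun _ => (1 : ℝ)) := by
    subst hJ
    rw [← Matrix.mulVec_mulVec, ← Matrix.mulVec_mulVec, ← hd]
    have h1 : Matrix.diagonal (fun j => (d j)⁻¹) *ᵥ d = (fun _ => (1 : ℝ)) := by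
      funext j
      simp [Matrix.mulVec_diagonal, inv_mul_cancel₀ (hdpos j).ne']
    rw [h1]
    funext k
    simp only [Matrix.mulVec, dotProduct, Matrix.transpose_apply, mul_one]
    exact hBcol k
  have hinv : J⁻¹ *ᵥ (fun _ => (1 : ℝ)) = θ := by
    rw [← hJθ, Matrix.mulVec_mulVec, Matrix.nonsing_inv_mul J hJinv, Matrix.one_mulVec]
  have hJsym : Jᵀ = J := by
    subst hJ
    simp [Matrix.transpose_mul, Matrix.diagonal_transpose, Matrix.mul_assoc]
  have hvm : (fun _ => (1 : ℝ)) ᵥ* J⁻¹ = θ := by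
    have : (J⁻¹)ᵀ = J⁻¹ := by
      rw [Matrix.transpose_nonsing_inv, hJsym]
    rw [← this, Matrix.vecMul_transpose, hinv]
  have hdot : (fun _ => (1 : ℝ)) ⬝ᵥ (J⁻¹ *ᵥ (fun _ => (1 : ℝ))) = 1 := by
    rw [hinv]
    simpa [dotProduct] using hθsum
  refine ⟨hinv, hdot, ?_⟩
  rw [hdot, hinv, hvm, inv_one, one_smul]
end

section
/- Fix W ≥ 2 and p ∈ (0,1], q = 1 − p. Let B̃ be the W×W upper-triangular matrix with entries B̃_{1k} = p·q^{k−1} for 1 ≤ k ≤ W, B̃_{jk} = p²·q^{k−j} for 2 ≤ j ≤ k ≤ W, and B̃_{jk} = 0 for j > k (the PS+SYN+SEQ matrix). Then B̃ is invertible and its inverse is the upper-bidiagonal matrix with (B̃⁻¹)_{11} = 1/p, (B̃⁻¹)_{12} = −q/p², and for 2 ≤ j ≤ W: (B̃⁻¹)_{jj} = 1/p², (B̃⁻¹)_{j,j+1} = −q/p² (when j+1 ≤ W), all other entries being 0. -/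
open Matrix

/-- The PS+SYN+SEQ matrix `B̃` with first row `B̃_{1k} = p q^{k−1}` and
entries `B̃_{jk} = p² q^{k−j}` for `2 ≤ j ≤ k ≤ W` (zero below the diagonal) is
invertible; its inverse is upper-bidiagonal with `(B̃⁻¹)_{11} = 1/p`,
`(B̃⁻¹)_{jj} = 1/p²` for `j ≥ 2`, `(B̃⁻¹)_{j,j+1} = −q/p²`, and all other entries zero.
Lean index `j : Fin W` corresponds to size `j+1`. -/
theorem stmt_8 (W : ℕ) (hW : 2 ≤ W)
    (p q : ℝ) (hp0 : 0 < p) (hp1 : p ≤ 1) (hq : q = 1 - p)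
    (Bt : Matrix (Fin W) (Fin W) ℝ)
    (hBt : ∀ j k : Fin W, Bt j k =
      if (j : ℕ) = 0 then p * q ^ (k : ℕ)
      else if (j : ℕ) ≤ (k : ℕ) then p ^ 2 * q ^ ((k : ℕ) - (j : ℕ))
      else 0) :
    IsUnit Bt.det ∧
    ∀ j k : Fin W, Bt⁻¹ j k =
      if (k : ℕ) = (j : ℕ) then (if (j : ℕ) = 0 then p⁻¹ else (p ^ 2)⁻¹)
      else if (k : ℕ) = (j : ℕ) + 1 then -q / p ^ 2
      else 0 := by
  have hp : p ≠ 0 := ne_of_gt hp0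
  set P : Matrix (Fin W) (Fin W) ℝ := Matrix.of (fun j k : Fin W =>
    if (k : ℕ) = (j : ℕ) then (if (j : ℕ) = 0 then p⁻¹ else (p ^ 2)⁻¹)
    else if (k : ℕ) = (j : ℕ) + 1 then -q / p ^ 2
    else 0) with hP
  have hmul : Bt * P = 1 := by
    ext j k
    rw [Matrix.mul_apply]
    rcases k with ⟨kv, hkv⟩
    match kv, hkv with
    | 0, hkv =>
      have hsum : ∀ l : Fin W, Bt j l * P l ⟨0, hkv⟩ =
          if l = ⟨0, hkv⟩ then Bt j ⟨0, hkv⟩ * p⁻¹ else 0 := by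
        intro l
        simp only [hP, Matrix.of_apply]
        by_cases h : l = ⟨0, hkv⟩
        · subst h; simp
        · have hl : (0 : ℕ) ≠ (l : ℕ) := by
            intro h0
            exact h (Fin.ext h0.symm)
          simp [hl, h]
      rw [Finset.sum_congr rfl (fun l _ => hsum l), Finset.sum_ite_eq']
      simp only [Finset.mem_univ, if_true]
      rw [hBt]
      by_cases hj : (j : ℕ) = 0
      · have : j = ⟨0, hkv⟩ := Fin.ext hj
        subst this
        simp [Matrix.one_apply, hp]
      · have hjle : ¬ ((j : ℕ) ≤ 0) := by omega
        have hne : j ≠ ⟨0, hkv⟩ := by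
          intro h; apply hj; rw [h]
        simp [hj, hjle, Matrix.one_apply, hne]
    | (m + 1), hkv =>
      have hm : m < W := by omega
      have hsum : ∀ l : Fin W, Bt j l * P l ⟨m + 1, hkv⟩ =
          (if l = ⟨m + 1, hkv⟩ then Bt j ⟨m + 1, hkv⟩ * (p ^ 2)⁻¹ else 0)
          + (if l = ⟨m, hm⟩ then Bt j ⟨m, hm⟩ * (-q / p ^ 2) else 0) := by
        intro l
        simp only [hP, Matrix.of_apply]
        by_cases h1 : l = ⟨m + 1, hkv⟩
        · subst h1; simp
        · by_cases h2 : l = ⟨m, hm⟩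
          · subst h2
            simp
          · have hl1 : (m + 1 : ℕ) ≠ (l : ℕ) := by
              intro h0; exact h1 (Fin.ext h0.symm)
            have hl2 : (m + 1 : ℕ) ≠ (l : ℕ) + 1 := by
              intro h0
              apply h2; apply Fin.ext; simp only []; omega
            simp [hl1, hl2, h1, h2]
            intro h0; exact absurd (Fin.ext h0.symm) h2
      rw [Finset.sum_congr rfl (fun l _ => hsum l), Finset.sum_add_distrib,
        Finset.sum_ite_eq', Finset.sum_ite_eq']
      simp only [Finset.mem_univ, if_true]
      rw [hBt, hBt]
      by_cases hj : (j : ℕ) = 0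
      · have hne : j ≠ ⟨m + 1, hkv⟩ := by
          intro h; rw [h] at hj; simp at hj
        simp only [hj, if_true, Matrix.one_apply, hne, if_false]
        field_simp
        ring
      · simp only [hj, if_false]
        by_cases hle : (j : ℕ) ≤ m
        · have hle1 : (j : ℕ) ≤ m + 1 := by omega
          have hne : j ≠ ⟨m + 1, hkv⟩ := by
            intro h; rw [h] at hle; simp at hle
          have hsub : (m + 1 : ℕ) - (j : ℕ) = (m - (j : ℕ)) + 1 := by omega
          simp only [hle, hle1, if_true, Matrix.one_apply, hne, if_false]
          rw [hsub]
          field_simp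
          ring
        · by_cases heq : (j : ℕ) = m + 1
          · have hj' : j = ⟨m + 1, hkv⟩ := Fin.ext heq
            have hle1 : (j : ℕ) ≤ m + 1 := by omega
            simp only [hle, hle1, if_true, if_false, Matrix.one_apply, hj', heq]
            field_simp
            simp
          · have hle1 : ¬ ((j : ℕ) ≤ m + 1) := by omega
            have hne : j ≠ ⟨m + 1, hkv⟩ := by
              intro h; rw [h] at heq; simp at heq
            simp [hle, hle1, Matrix.one_apply, hne]
  refine ⟨Matrix.isUnit_det_of_right_inverse hmul, fun j k => ?_⟩
  rw [Matrix.inv_eq_right_inv hmul]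
  rfl
end

section
/- Fix W ≥ 1 and p ∈ (0,1], q = 1 − p. Let B̃ be the W×W upper-triangular matrix with entries B̃_{jk} = p·q^{k−j} for 1 ≤ j ≤ k ≤ W and B̃_{jk} = 0 for j > k (the Sample and Hold matrix). Then B̃ is invertible and its inverse is the upper-bidiagonal matrix with (B̃⁻¹)_{jj} = 1/p for 1 ≤ j ≤ W, (B̃⁻¹)_{j,j+1} = −q/p for 1 ≤ j ≤ W−1, and all other entries 0. -/
open Matrix

/-- The Sample and Hold (SH) matrix `B̃` with entries
`B̃_{jk} = p q^{k−j}` for `1 ≤ j ≤ k ≤ W` (zero below the diagonal) is invertible;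
its inverse is upper-bidiagonal with `(B̃⁻¹)_{jj} = 1/p`, `(B̃⁻¹)_{j,j+1} = −q/p`,
and all other entries zero. Lean index `j : Fin W` corresponds to size `j+1`. -/
theorem stmt_9 (W : ℕ) (hW : 1 ≤ W)
    (p q : ℝ) (hp0 : 0 < p) (hp1 : p ≤ 1) (hq : q = 1 - p)
    (Bt : Matrix (Fin W) (Fin W) ℝ)
    (hBt : ∀ j k : Fin W, Bt j k =
      if (j : ℕ) ≤ (k : ℕ) then p * q ^ ((k : ℕ) - (j : ℕ)) else 0) :
    IsUnit Bt.det ∧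
    ∀ j k : Fin W, Bt⁻¹ j k =
      if (k : ℕ) = (j : ℕ) then p⁻¹
      else if (k : ℕ) = (j : ℕ) + 1 then -q / p
      else 0 := by
  have hp : p ≠ 0 := ne_of_gt hp0
  set C : Matrix (Fin W) (Fin W) ℝ := fun j k =>
    if (k : ℕ) = (j : ℕ) then p⁻¹
    else if (k : ℕ) = (j : ℕ) + 1 then -q / p
    else 0 with hC
  have hmul : C * Bt = 1 := by
    ext j k
    rw [Matrix.mul_apply]
    have hsplit : ∀ l : Fin W, C j l * Bt l k =
        (if l = j then p⁻¹ * Bt j k else 0) +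
        (if (l : ℕ) = (j : ℕ) + 1 then (-q / p) * Bt l k else 0) := by
      intro l
      by_cases h1 : (l : ℕ) = (j : ℕ)
      · have hl : l = j := Fin.ext h1
        subst hl
        simp [hC]
      · have hlj : l ≠ j := fun h => h1 (congrArg Fin.val h)
        by_cases h2 : (l : ℕ) = (j : ℕ) + 1
        · simp [hC, h1, h2, hlj]
        · simp [hC, h1, h2, hlj]
    rw [Finset.sum_congr rfl (fun l _ => hsplit l), Finset.sum_add_distrib,
      Finset.sum_ite_eq' Finset.univ j (fun _ => p⁻¹ * Bt j k)]
    simp only [Finset.mem_univ, if_true]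
    have hsecond : (∑ l : Fin W, if (l : ℕ) = (j : ℕ) + 1 then (-q / p) * Bt l k else 0) =
        if h : (j : ℕ) + 1 < W then (-q / p) * Bt ⟨(j : ℕ) + 1, h⟩ k else 0 := by
      by_cases hjW : (j : ℕ) + 1 < W
      · rw [dif_pos hjW]
        have : ∀ l : Fin W, ((l : ℕ) = (j : ℕ) + 1) ↔ l = ⟨(j : ℕ) + 1, hjW⟩ := by
          intro l
          constructor
          · intro h; exact Fin.ext h
          · intro h; subst h; rfl
        simp_rw [this]
        rw [Finset.sum_ite_eq' Finset.univ (⟨(j : ℕ) + 1, hjW⟩ : Fin W)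
          (fun l => (-q / p) * Bt l k)]
        simp
      · rw [dif_neg hjW]
        apply Finset.sum_eq_zero
        intro l _
        have : (l : ℕ) ≠ (j : ℕ) + 1 := by
          intro h
          exact hjW (h ▸ l.isLt)
        simp [this]
    rw [hsecond]
    rw [Matrix.one_apply]
    by_cases hjk : j = k
    · subst hjk
      rw [if_pos rfl, hBt]
      simp only [le_refl, if_true, Nat.sub_self, pow_zero, mul_one]
      rw [inv_mul_cancel₀ hp]
      by_cases hjW : (j : ℕ) + 1 < W
      · rw [dif_pos hjW, hBt]
        have : ¬ ((j : ℕ) + 1 ≤ (j : ℕ)) := by omega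
        simp [this]
      · rw [dif_neg hjW]; ring
    · rw [if_neg hjk]
      have hjkv : (j : ℕ) ≠ (k : ℕ) := fun h => hjk (Fin.ext h)
      by_cases hle : (j : ℕ) ≤ (k : ℕ)
      · -- j < k
        have hlt : (j : ℕ) < (k : ℕ) := lt_of_le_of_ne hle hjkv
        have hjW : (j : ℕ) + 1 < W := lt_of_le_of_lt hlt k.isLt
        rw [dif_pos hjW, hBt, hBt]
        have h1 : ((j : ℕ) + 1 : ℕ) ≤ (k : ℕ) := hlt
        rw [if_pos hle, if_pos h1]
        have hpow : (k : ℕ) - (j : ℕ) = ((k : ℕ) - ((j : ℕ) + 1)) + 1 := by omega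
        rw [hpow]
        field_simp
        ring
      · rw [hBt, if_neg hle]
        by_cases hjW : (j : ℕ) + 1 < W
        · rw [dif_pos hjW, hBt]
          have : ¬ ((j : ℕ) + 1 ≤ (k : ℕ)) := by omega
          simp [this]
        · rw [dif_neg hjW]; ring
  have hinv : Bt⁻¹ = C := Matrix.inv_eq_left_inv hmul
  refine ⟨Matrix.isUnit_det_of_left_inverse hmul, ?_⟩
  intro j k
  rw [hinv]
end

section
/- Fix W ≥ 2 and parameters p_f, p_p ∈ (0,1] with q_p = 1 − p_p. Let B̃ be the W×W upper-triangular matrix with entries B̃_{1k} = p_f·q_p^{k−1} for 1 ≤ k ≤ W, B̃_{jk} = p_f·p_p·q_p^{k−j} for 2 ≤ j ≤ k ≤ W, and B̃_{jk} = 0 for j > k (the Dual Sampling matrix). Then B̃ is invertible and its inverse is the upper-bidiagonal matrix with (B̃⁻¹)_{11} = 1/p_f, (B̃⁻¹)_{12} = −q_p/(p_f·p_p), and for 2 ≤ j ≤ W: (B̃⁻¹)_{jj} = 1/(p_f·p_p), (B̃⁻¹)_{j,j+1} = −q_p/(p_f·p_p) (when j+1 ≤ W), all other entries being 0. -/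
open Matrix

/-- The Dual Sampling (DS) matrix `B̃` with first row
`B̃_{1k} = p_f q_p^{k−1}` and entries `B̃_{jk} = p_f p_p q_p^{k−j}` for
`2 ≤ j ≤ k ≤ W` (zero below the diagonal) is invertible; its inverse is
upper-bidiagonal with `(B̃⁻¹)_{11} = 1/p_f`, `(B̃⁻¹)_{jj} = 1/(p_f p_p)` for `j ≥ 2`,
`(B̃⁻¹)_{j,j+1} = −q_p/(p_f p_p)`, and all other entries zero.
Lean index `j : Fin W` corresponds to size `j+1`. -/
theorem stmt_10 (W : ℕ) (hW : 2 ≤ W)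
    (pf pp qp : ℝ) (hpf0 : 0 < pf) (hpf1 : pf ≤ 1) (hpp0 : 0 < pp) (hpp1 : pp ≤ 1)
    (hqp : qp = 1 - pp)
    (Bt : Matrix (Fin W) (Fin W) ℝ)
    (hBt : ∀ j k : Fin W, Bt j k =
      if (j : ℕ) = 0 then pf * qp ^ (k : ℕ)
      else if (j : ℕ) ≤ (k : ℕ) then pf * pp * qp ^ ((k : ℕ) - (j : ℕ))
      else 0) :
    IsUnit Bt.det ∧
    ∀ j k : Fin W, Bt⁻¹ j k =
      if (k : ℕ) = (j : ℕ) then (if (j : ℕ) = 0 then pf⁻¹ else (pf * pp)⁻¹)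
      else if (k : ℕ) = (j : ℕ) + 1 then -qp / (pf * pp)
      else 0 := by
  have hpf : pf ≠ 0 := ne_of_gt hpf0
  have hpp : pp ≠ 0 := ne_of_gt hpp0
  have hfp : pf * pp ≠ 0 := mul_ne_zero hpf hpp
  set C : Matrix (Fin W) (Fin W) ℝ := fun j k =>
    if (k : ℕ) = (j : ℕ) then (if (j : ℕ) = 0 then pf⁻¹ else (pf * pp)⁻¹)
    else if (k : ℕ) = (j : ℕ) + 1 then -qp / (pf * pp)
    else 0 with hC
  have key : C * Bt = 1 := by
    ext j k
    rw [Matrix.mul_apply, Matrix.one_apply]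
    have hje : (j = k) = ((k : ℕ) = (j : ℕ)) := by
      simp [Fin.ext_iff, eq_comm]
    by_cases hj : (j : ℕ) + 1 < W
    · set j' : Fin W := ⟨(j : ℕ) + 1, hj⟩ with hj'
      have hne : j ≠ j' := by simp [hj', Fin.ext_iff]
      rw [Finset.sum_eq_add_of_mem j j' (Finset.mem_univ _) (Finset.mem_univ _) hne ?side]
      case side =>
        intro i _ hi
        obtain ⟨hi1, hi2⟩ := hi
        have h1 : (i : ℕ) ≠ (j : ℕ) := fun h => hi1 (Fin.ext h)
        have h2 : (i : ℕ) ≠ (j : ℕ) + 1 := fun h => hi2 (by simpa [hj', Fin.ext_iff] using h)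
        have : C j i = 0 := by simp [hC, h1, h2]
        rw [this, zero_mul]
      have hCjj : C j j = (if (j : ℕ) = 0 then pf⁻¹ else (pf * pp)⁻¹) := by simp [hC]
      have hCjj' : C j j' = -qp / (pf * pp) := by simp [hC, hj']
      rw [hCjj, hCjj', hBt j k, hBt j' k]
      simp only [hje]
      have hj'v : (j' : ℕ) = (j : ℕ) + 1 := rfl
      simp only [hj'v, Nat.succ_ne_zero, if_false]
      rcases lt_trichotomy (k : ℕ) (j : ℕ) with h | h | h
      · simp only [if_neg (show ¬ ((j : ℕ) = 0) by omega),
          if_neg (show ¬ ((j : ℕ) ≤ (k : ℕ)) by omega),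
          if_neg (show ¬ ((j : ℕ) + 1 ≤ (k : ℕ)) by omega),
          if_neg (show ¬ ((k : ℕ) = (j : ℕ)) by omega), mul_zero, add_zero]
      · simp only [if_neg (show ¬ ((j : ℕ) + 1 ≤ (k : ℕ)) by omega),
          if_pos (show (k : ℕ) = (j : ℕ) from h), mul_zero, add_zero]
        by_cases hj0 : (j : ℕ) = 0
        · simp only [if_pos hj0, h, hj0, pow_zero, mul_one, if_true]
          field_simp
        · simp only [if_neg hj0, if_pos (show (j : ℕ) ≤ (k : ℕ) by omega), h,
            Nat.sub_self, pow_zero, mul_one, le_refl, if_true]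
          field_simp
      · simp only [if_pos (show (j : ℕ) + 1 ≤ (k : ℕ) by omega),
          if_neg (show ¬ ((k : ℕ) = (j : ℕ)) by omega)]
        by_cases hj0 : (j : ℕ) = 0
        · simp only [if_pos hj0, hj0, zero_add, if_true]
          obtain ⟨m, hm⟩ : ∃ m, (k : ℕ) = m + 1 := ⟨(k : ℕ) - 1, by omega⟩
          rw [hm, Nat.add_sub_cancel, pow_succ]
          field_simp
          ring
        · simp only [if_neg hj0, if_pos (show (j : ℕ) ≤ (k : ℕ) by omega)]
          obtain ⟨m, hm⟩ : ∃ m, (k : ℕ) - (j : ℕ) = m + 1 := ⟨(k : ℕ) - (j : ℕ) - 1, by omega⟩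
          have hm2 : (k : ℕ) - ((j : ℕ) + 1) = m := by omega
          rw [hm, hm2, pow_succ]
          field_simp
          ring
    · rw [Finset.sum_eq_single j ?side (fun h => absurd (Finset.mem_univ j) h)]
      case side =>
        intro i _ hi1
        have h1 : (i : ℕ) ≠ (j : ℕ) := fun h => hi1 (Fin.ext h)
        have h2 : (i : ℕ) ≠ (j : ℕ) + 1 := by omega
        have : C j i = 0 := by simp [hC, h1, h2]
        rw [this, zero_mul]
      have hCjj : C j j = (if (j : ℕ) = 0 then pf⁻¹ else (pf * pp)⁻¹) := by simp [hC]
      rw [hCjj, hBt j k]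
      simp only [hje]
      have hkj : (k : ℕ) ≤ (j : ℕ) := by omega
      rcases lt_or_eq_of_le hkj with h | h
      · simp only [if_neg (show ¬ ((j : ℕ) = 0) by omega),
          if_neg (show ¬ ((j : ℕ) ≤ (k : ℕ)) by omega),
          if_neg (show ¬ ((k : ℕ) = (j : ℕ)) by omega), mul_zero]
      · simp only [if_pos (show (k : ℕ) = (j : ℕ) from h)]
        by_cases hj0 : (j : ℕ) = 0
        · simp only [if_pos hj0, h, hj0, pow_zero, mul_one, if_true]
          field_simp
        · simp only [if_neg hj0, if_pos (show (j : ℕ) ≤ (k : ℕ) by omega), h,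
            Nat.sub_self, pow_zero, mul_one, le_refl, if_true]
          field_simp
  have hunit : IsUnit Bt.det := Matrix.isUnit_det_of_left_inverse key
  refine ⟨hunit, ?_⟩
  have hinv : Bt⁻¹ = C := Matrix.inv_eq_left_inv key
  intro j k
  rw [hinv]
end

section
/- Fix W ≥ 1, a flow size distribution θ ∈ ℝ^W with θ_k > 0 for all k and Σ_{k=1}^W θ_k = 1, and p_f ∈ (0,1], q_f = 1 − p_f. The flow sampling Fisher information matrix J(θ) = q_f·𝟙_W 𝟙_Wᵀ + p_f·diag(1/θ₁,…,1/θ_W) is invertible with inverse J(θ)⁻¹ = (1/p_f)·diag(θ₁,…,θ_W) + (1 − 1/p_f)·θθᵀ. -/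
open Matrix

/-- The flow sampling Fisher information matrix
`J(θ) = q_f·𝟙𝟙ᵀ + p_f·diag(1/θ₁,…,1/θ_W)` is invertible, with inverse
`J(θ)⁻¹ = (1/p_f)·diag(θ) + (1 − 1/p_f)·θθᵀ`. -/
theorem stmt_11 (W : ℕ) (hW : 1 ≤ W)
    (θ : Fin W → ℝ) (hθpos : ∀ k, 0 < θ k) (hθsum : ∑ k, θ k = 1)
    (pf qf : ℝ) (hpf0 : 0 < pf) (hpf1 : pf ≤ 1) (hqf : qf = 1 - pf)
    (J : Matrix (Fin W) (Fin W) ℝ)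
    (hJ : J = qf • Matrix.vecMulVec (fun _ => (1 : ℝ)) (fun _ => (1 : ℝ)) +
      pf • Matrix.diagonal (fun k => (θ k)⁻¹)) :
    IsUnit J.det ∧
    J⁻¹ = (1 / pf) • Matrix.diagonal θ + (1 - 1 / pf) • Matrix.vecMulVec θ θ := by
  set K : Matrix (Fin W) (Fin W) ℝ :=
    (1 / pf) • Matrix.diagonal θ + (1 - 1 / pf) • Matrix.vecMulVec θ θ with hK
  have hJK : J * K = 1 := by
    ext i j
    have hsum : ∑ k, J i k * K k j
        = ∑ k, (qf * ((1 - 1/pf) * (θ k * θ j))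
            + (qf * ((1/pf) * if k = j then θ k else 0)
            + (pf * if i = k then (θ i)⁻¹ else 0) * K k j)) := by
      apply Finset.sum_congr rfl
      intro k _
      simp only [hJ, hK, Matrix.add_apply, Matrix.smul_apply, Matrix.vecMulVec_apply,
        Matrix.diagonal_apply, smul_eq_mul, Matrix.one_apply]
      by_cases h : i = k <;> by_cases h2 : k = j
      · subst h; subst h2; simp; ring
      · subst h; simp [h2]; ring
      · subst h2; simp [h]; ring
      · simp [h, h2]
    rw [Matrix.mul_apply, hsum, Finset.sum_add_distrib, Finset.sum_add_distrib]
    have e1 : ∑ x : Fin W, qf * ((1 - 1/pf) * (θ x * θ j)) = qf * (1 - 1/pf) * θ j := by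
      simp only [show ∀ x : Fin W, qf * ((1 - 1/pf) * (θ x * θ j))
          = (qf * (1 - 1/pf) * θ j) * θ x from fun x => by ring,
        ← Finset.mul_sum, hθsum, mul_one]
    have e2 : ∑ x : Fin W, qf * (1/pf * if x = j then θ x else 0) = qf * (1/pf) * θ j := by
      simp only [mul_ite, mul_zero, Finset.sum_ite_eq', Finset.mem_univ, if_true]; ring
    have e3 : ∑ x : Fin W, (pf * if i = x then (θ i)⁻¹ else 0) * K x j
        = pf * (θ i)⁻¹ * K i j := by
      simp only [mul_ite, mul_zero, ite_mul, zero_mul, Finset.sum_ite_eq,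
        Finset.mem_univ, if_true]
    rw [e1, e2, e3]
    have hθi := (hθpos i).ne'
    have hθj := (hθpos j).ne'
    simp only [hK, Matrix.add_apply, Matrix.smul_apply, Matrix.diagonal_apply,
      Matrix.vecMulVec_apply, smul_eq_mul, Matrix.one_apply, hqf]
    by_cases h : i = j <;> simp [h] <;> field_simp <;> ring
  exact ⟨Matrix.isUnit_det_of_right_inverse hJK, Matrix.inv_eq_right_inv hJK⟩
end

section
/- Let B be a column-stochastic sampling matrix with B̃ invertible and d_j > 0 for all 0 ≤ j ≤ W, and write b'_{jk} = (B̃⁻¹)_{jk}. Then for every 1 ≤ j ≤ W the j-th diagonal element of J(θ)⁻¹ is (J(θ)⁻¹)_{jj} = Σ_{k=1}^W (b'_{jk})² d_k − ( Σ_{k=j}^W d_k b'_{jk} Σ_{ℓ=1}^k b_{0ℓ} b'_{ℓk} )² / ( d₀ + Σ_{k=1}^W d_k ( Σ_{ℓ=1}^k b_{0ℓ} b'_{ℓk} )² ). -/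
open Matrix

private lemma sm_L1 {n : Type*} [Fintype n] [DecidableEq n] (C : Matrix n n ℝ) (a b : n → ℝ) :
    C * vecMulVec a b = vecMulVec (C *ᵥ a) b := by
  ext i j
  simp [Matrix.mul_apply, vecMulVec_apply, Matrix.mulVec, dotProduct, Finset.sum_mul, mul_assoc]

private lemma sm_L2 {n : Type*} [Fintype n] [DecidableEq n] (C : Matrix n n ℝ) (a b : n → ℝ) :
    vecMulVec a b * C = vecMulVec a (b ᵥ* C) := by
  ext i j
  simp [Matrix.mul_apply, vecMulVec_apply, Matrix.vecMul, dotProduct, Finset.mul_sum, mul_assoc]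

private lemma sm_L3 {n : Type*} [Fintype n] [DecidableEq n] (a b c e : n → ℝ) :
    vecMulVec a b * vecMulVec c e = (b ⬝ᵥ c) • vecMulVec a e := by
  ext i j
  simp [Matrix.mul_apply, vecMulVec_apply, dotProduct, Finset.sum_mul, Finset.mul_sum]
  ring_nf
  exact Finset.sum_congr rfl fun x _ => by ring

/-- For a column-stochastic sampling matrix `B` with invertible `B̃`
and positive `d`, writing `b'_{jk} = (B̃⁻¹)_{jk}`, every diagonal element of `J(θ)⁻¹`
satisfies
`(J⁻¹)_{jj} = Σ_{k=1}^W (b'_{jk})² d_k −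
 (Σ_{k=j}^W d_k b'_{jk} Σ_{ℓ=1}^k b_{0ℓ} b'_{ℓk})² /
 (d₀ + Σ_{k=1}^W d_k (Σ_{ℓ=1}^k b_{0ℓ} b'_{ℓk})²)`.
Lean column index `k : Fin W` corresponds to size `k+1`; `d k.succ` is `d_{k+1}`. -/
theorem stmt_12 (W : ℕ) (hW : 1 ≤ W)
    (θ : Fin W → ℝ) (hθpos : ∀ k, 0 < θ k) (hθsum : ∑ k, θ k = 1)
    (B : Matrix (Fin (W + 1)) (Fin W) ℝ)
    (hBnonneg : ∀ j k, 0 ≤ B j k)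
    (hBtri : ∀ (j : Fin (W + 1)) (k : Fin W), (k : ℕ) + 1 < (j : ℕ) → B j k = 0)
    (hBcol : ∀ k, ∑ j, B j k = 1)
    (Bt : Matrix (Fin W) (Fin W) ℝ) (hBt : ∀ j k, Bt j k = B j.succ k)
    (hBtinv : IsUnit Bt.det)
    (d : Fin (W + 1) → ℝ) (hd : d = B *ᵥ θ)
    (hdpos : ∀ j, 0 < d j)
    (J : Matrix (Fin W) (Fin W) ℝ)
    (hJ : J = Bᵀ * Matrix.diagonal (fun j => (d j)⁻¹) * B) :
    ∀ j : Fin W,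
      J⁻¹ j j =
        (∑ k : Fin W, (Bt⁻¹ j k) ^ 2 * d k.succ) -
        (∑ k ∈ Finset.univ.filter (fun k : Fin W => j ≤ k),
            d k.succ * Bt⁻¹ j k *
              ∑ ℓ ∈ Finset.univ.filter (fun ℓ : Fin W => ℓ ≤ k), B 0 ℓ * Bt⁻¹ ℓ k) ^ 2 /
        (d 0 + ∑ k : Fin W, d k.succ *
            (∑ ℓ ∈ Finset.univ.filter (fun ℓ : Fin W => ℓ ≤ k), B 0 ℓ * Bt⁻¹ ℓ k) ^ 2) := by
  intro j
  haveI : Invertible Bt := Bt.invertibleOfIsUnitDet hBtinv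
  have hdne : ∀ i : Fin (W + 1), d i ≠ 0 := fun i => (hdpos i).ne'
  -- triangularity of Bt and its inverse
  have hBtTri : Bt.BlockTriangular id := by
    intro a b hab
    rw [hBt]
    exact hBtri a.succ b (by simpa using hab)
  have hBtiTri : (Bt⁻¹).BlockTriangular id :=
    blockTriangular_inv_of_blockTriangular hBtTri
  have htri : ∀ ℓ k : Fin W, k < ℓ → Bt⁻¹ ℓ k = 0 := fun ℓ k h => hBtiTri h
  -- notation
  set v : Fin W → ℝ := fun ℓ => B 0 ℓ with hv
  set Dt : Matrix (Fin W) (Fin W) ℝ := Matrix.diagonal (fun k : Fin W => d k.succ) with hDt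
  set Di : Matrix (Fin W) (Fin W) ℝ := Matrix.diagonal (fun k : Fin W => (d k.succ)⁻¹) with hDi
  set A : Matrix (Fin W) (Fin W) ℝ := Btᵀ * Di * Bt with hA
  set N : Matrix (Fin W) (Fin W) ℝ := Bt⁻¹ * Dt * (Bt⁻¹)ᵀ with hN
  have hAN : A * N = 1 := by
    have h1 : Bt * Bt⁻¹ = 1 := Bt.mul_nonsing_inv hBtinv
    have h2 : Di * Dt = 1 := by
      rw [hDi, hDt, Matrix.diagonal_mul_diagonal]
      simp only [fun k : Fin W => inv_mul_cancel₀ (hdne k.succ)]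
      exact Matrix.diagonal_one
    have h3 : Btᵀ * (Bt⁻¹)ᵀ = 1 := by
      rw [← Matrix.transpose_mul, Bt.nonsing_inv_mul hBtinv, Matrix.transpose_one]
    calc A * N = Btᵀ * Di * (Bt * Bt⁻¹) * Dt * (Bt⁻¹)ᵀ := by
          simp only [hA, hN, Matrix.mul_assoc]
      _ = Btᵀ * (Di * Dt) * (Bt⁻¹)ᵀ := by rw [h1, Matrix.mul_one]; simp only [Matrix.mul_assoc]
      _ = 1 := by rw [h2, Matrix.mul_one, h3]
  -- symmetric N
  have hNsymm : Nᵀ = N := by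
    rw [hN]
    simp [Matrix.transpose_mul, Matrix.mul_assoc, hDt]
  -- J decomposition
  have hJA : J = A + (d 0)⁻¹ • vecMulVec v v := by
    ext a b
    rw [hJ]
    have lhs : (Bᵀ * Matrix.diagonal (fun j => (d j)⁻¹) * B) a b
        = ∑ i, B i a * ((d i)⁻¹ * B i b) := by
      simp only [Matrix.mul_apply, Matrix.diagonal_apply, Finset.sum_mul, Matrix.transpose_apply,
        Finset.mul_sum]
      simp [Finset.sum_ite_eq, Finset.mul_sum, mul_assoc]
    rw [lhs, Fin.sum_univ_succ]
    have rhs : A a b = ∑ i : Fin W, B i.succ a * ((d i.succ)⁻¹ * B i.succ b) := by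
      rw [hA, Matrix.mul_assoc]
      simp [Matrix.mul_apply, hDi, Matrix.diagonal_apply, Matrix.transpose_apply, hBt,
        ite_mul, zero_mul, Finset.sum_ite_eq, Finset.sum_ite_eq']
    simp only [Matrix.add_apply, Matrix.smul_apply, vecMulVec_apply, rhs, smul_eq_mul, hv]
    ring
  set c : Fin W → ℝ := (Bt⁻¹)ᵀ *ᵥ v with hc
  set w : Fin W → ℝ := N *ᵥ v with hw
  have hcw : w = Bt⁻¹ *ᵥ (Dt *ᵥ c) := by
    rw [hw, hc, hN, ← Matrix.mulVec_mulVec, ← Matrix.mulVec_mulVec]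
  set q : ℝ := v ⬝ᵥ w with hq
  have hqval : q = ∑ k : Fin W, d k.succ * (c k) ^ 2 := by
    rw [hq, hcw, Matrix.dotProduct_mulVec]
    have : v ᵥ* Bt⁻¹ = c := by rw [hc, ← Matrix.mulVec_transpose]
    rw [this]
    simp [dotProduct, Matrix.mulVec, hDt, Matrix.diagonal_apply, Finset.mul_sum, dotProduct]
    exact Finset.sum_congr rfl fun x _ => by ring
  have hq0 : 0 ≤ q := by
    rw [hqval]
    exact Finset.sum_nonneg fun k _ => mul_nonneg (hdpos k.succ).le (sq_nonneg _)
  set s : ℝ := d 0 + q with hs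
  have hspos : 0 < s := by rw [hs]; linarith [hdpos 0]
  have hsne : s ≠ 0 := hspos.ne'
  set M : Matrix (Fin W) (Fin W) ℝ := N - s⁻¹ • vecMulVec w w with hM
  have hAw : A *ᵥ w = v := by
    rw [hw, Matrix.mulVec_mulVec, hAN, Matrix.one_mulVec]
  have hvN : v ᵥ* N = w := by
    conv_lhs => rw [← hNsymm]
    rw [Matrix.vecMul_transpose]
  have hJM : J * M = 1 := by
    rw [hJA, hM]
    rw [add_mul, mul_sub, mul_sub, Matrix.mul_smul, Matrix.smul_mul, Matrix.smul_mul,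
      Matrix.mul_smul, sm_L1, sm_L2, sm_L3, hAN, hAw, hvN]
    rw [← hq]
    have hsne' : d 0 + q ≠ 0 := by rw [← hs]; exact hsne
    have key : (d 0)⁻¹ - s⁻¹ - (d 0)⁻¹ * s⁻¹ * q = 0 := by
      have h0 : d 0 ≠ 0 := hdne 0
      have e : s - d 0 - q = 0 := by rw [hs]; ring
      have e2 : (d 0)⁻¹ - s⁻¹ - (d 0)⁻¹ * s⁻¹ * q = (d 0)⁻¹ * s⁻¹ * (s - d 0 - q) := by
        field_simp [h0, hsne]
      rw [e2, e, mul_zero]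
    calc 1 - s⁻¹ • vecMulVec v w +
          ((d 0)⁻¹ • vecMulVec v w - (d 0)⁻¹ • s⁻¹ • q • vecMulVec v w)
        = 1 + ((d 0)⁻¹ - s⁻¹ - (d 0)⁻¹ * s⁻¹ * q) • vecMulVec v w := by
          module
      _ = 1 := by rw [key, zero_smul, add_zero]
  have hJinv : J⁻¹ = M := inv_eq_right_inv hJM
  -- compute c as the filtered sums
  have hcval : ∀ k : Fin W,
      (∑ ℓ ∈ Finset.univ.filter (fun ℓ : Fin W => ℓ ≤ k), B 0 ℓ * Bt⁻¹ ℓ k) = c k := by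
    intro k
    rw [Finset.sum_filter_of_ne (fun ℓ _ hne => by
      by_contra hle
      exact hne (by rw [htri ℓ k (lt_of_not_ge hle), mul_zero]))]
    rw [hc]
    simp [Matrix.mulVec, dotProduct, Matrix.transpose_apply, mul_comm, hv]
  -- compute w j as the filtered sum
  have hwval : (∑ k ∈ Finset.univ.filter (fun k : Fin W => j ≤ k),
      d k.succ * Bt⁻¹ j k *
        ∑ ℓ ∈ Finset.univ.filter (fun ℓ : Fin W => ℓ ≤ k), B 0 ℓ * Bt⁻¹ ℓ k) = w j := by
    rw [Finset.sum_filter_of_ne (fun k _ hne => by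
      by_contra hle
      exact hne (by rw [htri j k (lt_of_not_ge hle), mul_zero, zero_mul]))]
    rw [hcw]
    simp only [Matrix.mulVec, dotProduct, hDt, Matrix.diagonal_apply]
    rw [Finset.sum_congr rfl (fun k _ => by rw [hcval k])]
    simp [Finset.mul_sum, Finset.sum_ite_eq]
    exact Finset.sum_congr rfl fun x _ => by ring
  have hNjj : N j j = ∑ k : Fin W, (Bt⁻¹ j k) ^ 2 * d k.succ := by
    rw [hN, Matrix.mul_assoc]
    simp [Matrix.mul_apply, hDt, Matrix.diagonal_apply, Finset.mul_sum, Matrix.transpose_apply,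
      Finset.sum_ite_eq]
    exact Finset.sum_congr rfl fun x _ => by ring
  have hden : (d 0 + ∑ k : Fin W, d k.succ *
      (∑ ℓ ∈ Finset.univ.filter (fun ℓ : Fin W => ℓ ≤ k), B 0 ℓ * Bt⁻¹ ℓ k) ^ 2) = s := by
    rw [hs, hqval]
    congr 1
    exact Finset.sum_congr rfl fun k _ => by rw [hcval k]
  rw [hJinv, hM, hwval, hden, Matrix.sub_apply, Matrix.smul_apply, vecMulVec_apply, hNjj]
  rw [div_eq_inv_mul, smul_eq_mul]
  ring
end

section
/- Fix W ≥ 3, a flow size distribution θ ∈ ℝ^W with θ_k > 0 and Σθ_k = 1, and p ∈ (0,1), q = 1 − p. Let B_Q be the (W+1)×W sampling matrix of PS+SEQ: row 0 entries q^k; b_{1k} = k p q^{k−1}; b_{jk} = (k−j+1) p² q^{k−j} for 2 ≤ j ≤ k ≤ W; zero otherwise. Let B_SQ be the (W+1)×W sampling matrix of PS+SYN+SEQ: row 0 entries q; b_{1k} = p q^{k−1}; b_{jk} = p² q^{k−j} for 2 ≤ j ≤ k ≤ W; zero otherwise. Let J_Q and J_SQ be the corresponding Fisher information matrices. Then for every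 3 ≤ j ≤ W, (J_SQ⁻¹)_{jj} ≤ (J_Q⁻¹)_{jj}. -/
open Matrix Finset

/-- Fisher information `J(θ) = Bᵀ diag(1/d_j) B` with `d = Bθ`, for a sampling matrix
`B` whose rows are indexed by sampled size `j : Fin (W+1)` and whose columns are
indexed by `k : Fin W`, column `k` corresponding to original flow size `k+1`. -/
noncomputable def fisherInfo {W : ℕ} (B : Matrix (Fin (W + 1)) (Fin W) ℝ)
    (θ : Fin W → ℝ) : Matrix (Fin W) (Fin W) ℝ :=
  Bᵀ * Matrix.diagonal (fun j => ((B *ᵥ θ) j)⁻¹) * B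

/-- PS+SEQ sampling matrix: row `0` entries `q^k`; `b_{1k} = k p q^{k−1}`;
`b_{jk} = (k−j+1) p² q^{k−j}` for `2 ≤ j ≤ k ≤ W`; zero otherwise
(column `k : Fin W` corresponds to flow size `k+1`). -/
noncomputable def B_Q (W : ℕ) (p : ℝ) : Matrix (Fin (W + 1)) (Fin W) ℝ :=
  fun j k =>
    if (j : ℕ) = 0 then (1 - p) ^ ((k : ℕ) + 1)
    else if (j : ℕ) = 1 then ((k : ℕ) + 1 : ℝ) * p * (1 - p) ^ (k : ℕ)
    else if (j : ℕ) ≤ (k : ℕ) + 1 then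
      ((k : ℕ) + 1 - (j : ℕ) + 1 : ℕ) * p ^ 2 * (1 - p) ^ ((k : ℕ) + 1 - (j : ℕ))
    else 0

/-- PS+SYN+SEQ sampling matrix: row `0` entries `q`; `b_{1k} = p q^{k−1}`;
`b_{jk} = p² q^{k−j}` for `2 ≤ j ≤ k ≤ W`; zero otherwise
(column `k : Fin W` corresponds to flow size `k+1`). -/
noncomputable def B_SQ (W : ℕ) (p : ℝ) : Matrix (Fin (W + 1)) (Fin W) ℝ :=
  fun j k =>
    if (j : ℕ) = 0 then 1 - p
    else if (j : ℕ) = 1 then p * (1 - p) ^ (k : ℕ)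
    else if (j : ℕ) ≤ (k : ℕ) + 1 then p ^ 2 * (1 - p) ^ ((k : ℕ) + 1 - (j : ℕ))
    else 0


-- sum over Fin N of indicator at value c
lemma sum_fin_indicator {N : ℕ} (f : Fin N → ℝ) (c : ℕ) :
    ∑ i : Fin N, (if (i : ℕ) = c then f i else 0) =
      if h : c < N then f ⟨c, h⟩ else 0 := by
  split
  · next h =>
    rw [Finset.sum_eq_single ⟨c, h⟩]
    · simp
    · intro b _ hb
      simp only [ite_eq_right_iff]
      intro hbc
      exact absurd (Fin.ext hbc : b = ⟨c, h⟩) hb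
    · simp
  · next h =>
    apply Finset.sum_eq_zero
    intro i _
    simp only [ite_eq_right_iff]
    intro hic
    exact absurd (hic ▸ i.isLt) h

lemma inv_diag_of_solve {n : ℕ} (J : Matrix (Fin n) (Fin n) ℝ)
    (hJ : IsUnit J.det) (x : Fin n → ℝ) (j : Fin n)
    (h : J *ᵥ x = Pi.single j 1) : J⁻¹ j j = x j := by
  have h2 : J⁻¹ *ᵥ (J *ᵥ x) = J⁻¹ *ᵥ Pi.single j 1 := by rw [h]
  rw [mulVec_mulVec, Matrix.nonsing_inv_mul _ hJ, one_mulVec, mulVec_single] at h2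
  have := congrFun h2 j
  simp at this
  rw [this]

-- generic posdef for fisher-type matrices
lemma fisher_posdef {W : ℕ} (B : Matrix (Fin (W + 1)) (Fin W) ℝ) (θ : Fin W → ℝ)
    (hd : ∀ i, 0 < (B *ᵥ θ) i)
    (hinj : ∀ x : Fin W → ℝ, B *ᵥ x = 0 → x = 0) :
    (Bᵀ * Matrix.diagonal (fun j => ((B *ᵥ θ) j)⁻¹) * B).PosDef := by
  set D := Matrix.diagonal (fun j => ((B *ᵥ θ) j)⁻¹) with hD
  refine Matrix.posDef_iff_dotProduct_mulVec.mpr ⟨?_, ?_⟩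
  · show (Bᵀ * D * B)ᴴ = Bᵀ * D * B
    rw [conjTranspose_eq_transpose_of_trivial, transpose_mul, transpose_mul,
      transpose_transpose, hD, diagonal_transpose, Matrix.mul_assoc]
  · intro x hx
    have key : dotProduct (star x) ((Bᵀ * D * B) *ᵥ x)
        = ∑ i, ((B *ᵥ θ) i)⁻¹ * ((B *ᵥ x) i) ^ 2 := by
      rw [star_trivial, ← mulVec_mulVec, ← mulVec_mulVec, Matrix.dotProduct_mulVec,
        Matrix.vecMul_transpose, hD]
      simp only [dotProduct, Matrix.mulVec_diagonal]
      exact Finset.sum_congr rfl fun i _ => by ring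
    rw [key]
    have hBx : B *ᵥ x ≠ 0 := fun h0 => hx (hinj x h0)
    obtain ⟨i0, hi0⟩ : ∃ i, (B *ᵥ x) i ≠ 0 := by
      by_contra hc
      push_neg at hc
      exact hBx (funext hc)
    apply Finset.sum_pos'
    · intro i _
      exact mul_nonneg (inv_nonneg.mpr (hd i).le) (sq_nonneg _)
    · exact ⟨i0, Finset.mem_univ i0,
        mul_pos (inv_pos.mpr (hd i0)) (by rw [← sq_abs]; exact pow_pos (abs_pos.mpr hi0) 2)⟩

lemma mulVec_zero_of_triangular {W : ℕ} (B : Matrix (Fin (W + 1)) (Fin W) ℝ)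
    (hlow : ∀ (i : Fin (W + 1)) (k : Fin W), (k : ℕ) + 1 < (i : ℕ) → B i k = 0)
    (hdiag : ∀ k : Fin W, B ⟨(k : ℕ) + 1, by omega⟩ k ≠ 0)
    (x : Fin W → ℝ) (hx : B *ᵥ x = 0) : x = 0 := by
  have key : ∀ n : ℕ, ∀ k : Fin W, W ≤ (k : ℕ) + n → x k = 0 := by
    intro n
    induction n with
    | zero => intro k hk; exact absurd hk (by omega)
    | succ n ih =>
      intro k hk
      have h0 := congrFun hx ⟨(k : ℕ) + 1, by omega⟩
      rw [Matrix.mulVec, dotProduct, Finset.sum_eq_single k] at h0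
      · have := hdiag k
        simpa [Pi.zero_apply, mul_eq_zero, this] using h0
      · intro b _ hb
        rcases Nat.lt_or_ge (b : ℕ) (k : ℕ) with h | h
        · rw [hlow _ _ (by simp; omega), zero_mul]
        · have hbk : (k : ℕ) < (b : ℕ) :=
            lt_of_le_of_ne h (fun hc => hb (Fin.ext hc.symm))
          rw [ih b (by omega), mul_zero]
      · intro h; exact absurd (Finset.mem_univ k) h
  funext k
  exact key W k (by omega)


noncomputable def Sn (W : ℕ) (q : ℝ) (θ : Fin W → ℝ) (i : ℕ) : ℝ :=
  ∑ k : Fin W, (if i ≤ (k : ℕ) + 1 then q ^ ((k : ℕ) + 1 - i) else 0) * θ k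

noncomputable def Tn (W : ℕ) (q : ℝ) (θ : Fin W → ℝ) (i : ℕ) : ℝ :=
  ∑ k : Fin W,
    (if i ≤ (k : ℕ) + 1 then (((k : ℕ) + 2 - i : ℕ) : ℝ) * q ^ ((k : ℕ) + 1 - i) else 0) * θ k

section SnTn
variable {W : ℕ} {q : ℝ} {θ : Fin W → ℝ}

lemma Sn_vanish (i : ℕ) (h : W < i) : Sn W q θ i = 0 := by
  apply Finset.sum_eq_zero
  intro k _
  rw [if_neg (by omega), zero_mul]

lemma Tn_vanish (i : ℕ) (h : W < i) : Tn W q θ i = 0 := by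
  apply Finset.sum_eq_zero
  intro k _
  rw [if_neg (by omega), zero_mul]

lemma Sn_nonneg (hq : 0 ≤ q) (hθ : ∀ k, 0 ≤ θ k) (i : ℕ) : 0 ≤ Sn W q θ i := by
  apply Finset.sum_nonneg
  intro k _
  apply mul_nonneg _ (hθ k)
  split
  · positivity
  · exact le_refl 0

lemma Sn_le_Tn (hq : 0 ≤ q) (hθ : ∀ k, 0 ≤ θ k) (i : ℕ) : Sn W q θ i ≤ Tn W q θ i := by
  apply Finset.sum_le_sum
  intro k _
  apply mul_le_mul_of_nonneg_right _ (hθ k)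
  split
  · next h =>
    nth_rewrite 1 [← one_mul (q ^ ((k : ℕ) + 1 - i))]
    apply mul_le_mul_of_nonneg_right _ (by positivity)
    have : 1 ≤ (k : ℕ) + 2 - i := by omega
    exact_mod_cast Nat.one_le_cast.mpr this
  · exact le_refl 0

lemma Tn_nonneg (hq : 0 ≤ q) (hθ : ∀ k, 0 ≤ θ k) (i : ℕ) : 0 ≤ Tn W q θ i :=
  le_trans (Sn_nonneg hq hθ i) (Sn_le_Tn hq hθ i)

lemma Sn_rec (j : Fin W) :
    Sn W q θ ((j : ℕ) + 1) = θ j + q * Sn W q θ ((j : ℕ) + 2) := by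
  have key : ∀ k : Fin W,
      (if (j : ℕ) + 1 ≤ (k : ℕ) + 1 then q ^ ((k : ℕ) + 1 - ((j : ℕ) + 1)) else 0) * θ k
      = (if (k : ℕ) = (j : ℕ) then θ k else 0)
        + q * ((if (j : ℕ) + 2 ≤ (k : ℕ) + 1 then q ^ ((k : ℕ) + 1 - ((j : ℕ) + 2)) else 0) * θ k) := by
    intro k
    rcases lt_trichotomy (k : ℕ) (j : ℕ) with h | h | h
    · rw [if_neg (by omega), if_neg (by omega), if_neg (by omega)]; ring
    · rw [if_pos (by omega), if_pos h, if_neg (by omega),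
        show (k : ℕ) + 1 - ((j : ℕ) + 1) = 0 from by omega]
      ring
    · rw [if_pos (by omega), if_neg (by omega), if_pos (by omega),
        show (k : ℕ) + 1 - ((j : ℕ) + 1) = ((k : ℕ) + 1 - ((j : ℕ) + 2)) + 1 from by omega,
        pow_succ]
      ring
  unfold Sn
  rw [Finset.sum_congr rfl (fun k _ => key k), Finset.sum_add_distrib, ← Finset.mul_sum,
    sum_fin_indicator (fun k => θ k) (j : ℕ), dif_pos j.isLt]

end SnTn
section Dlemmas
variable {W : ℕ} {p : ℝ} {θ : Fin W → ℝ}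

lemma dQ_eval (i : Fin (W + 1)) (h2 : 2 ≤ (i : ℕ)) :
    (B_Q W p *ᵥ θ) i = p ^ 2 * Tn W (1 - p) θ (i : ℕ) := by
  unfold Tn
  simp only [Matrix.mulVec, dotProduct, Finset.mul_sum]
  refine Finset.sum_congr rfl fun k _ => ?_
  simp only [B_Q]
  rw [if_neg (by omega), if_neg (by omega)]
  by_cases h : (i : ℕ) ≤ (k : ℕ) + 1
  · rw [if_pos h, if_pos h, show (k : ℕ) + 1 - (i : ℕ) + 1 = (k : ℕ) + 2 - (i : ℕ) from by omega]
    ring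
  · rw [if_neg h, if_neg h]; ring

lemma dSQ_eval (i : Fin (W + 1)) (h2 : 2 ≤ (i : ℕ)) :
    (B_SQ W p *ᵥ θ) i = p ^ 2 * Sn W (1 - p) θ (i : ℕ) := by
  unfold Sn
  simp only [Matrix.mulVec, dotProduct, Finset.mul_sum]
  refine Finset.sum_congr rfl fun k _ => ?_
  simp only [B_SQ]
  rw [if_neg (by omega), if_neg (by omega)]
  by_cases h : (i : ℕ) ≤ (k : ℕ) + 1
  · rw [if_pos h, if_pos h]; ring
  · rw [if_neg h, if_neg h]; ring

lemma dSQ_eval1 (i : Fin (W + 1)) (h1 : (i : ℕ) = 1) :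
    (B_SQ W p *ᵥ θ) i = p * Sn W (1 - p) θ 1 := by
  unfold Sn
  simp only [Matrix.mulVec, dotProduct, Finset.mul_sum]
  refine Finset.sum_congr rfl fun k _ => ?_
  simp only [B_SQ]
  rw [if_neg (by omega), if_pos h1, if_pos (by omega),
    show (k : ℕ) + 1 - 1 = (k : ℕ) from by omega]
  ring

lemma dSQ_eval0 (i : Fin (W + 1)) (h0 : (i : ℕ) = 0) (hθsum : ∑ k, θ k = 1) :
    (B_SQ W p *ᵥ θ) i = 1 - p := by
  simp only [Matrix.mulVec, dotProduct, B_SQ, if_pos h0]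
  rw [← Finset.mul_sum, hθsum, mul_one]

lemma B_Q_nonneg (hp0 : 0 < p) (hp1 : p < 1) (i : Fin (W + 1)) (k : Fin W) :
    0 ≤ B_Q W p i k := by
  have hq : (0:ℝ) ≤ 1 - p := by linarith
  simp only [B_Q]
  split
  · positivity
  · split
    · positivity
    · split
      · positivity
      · exact le_refl 0

lemma B_SQ_nonneg (hp0 : 0 < p) (hp1 : p < 1) (i : Fin (W + 1)) (k : Fin W) :
    0 ≤ B_SQ W p i k := by
  have hq : (0:ℝ) ≤ 1 - p := by linarith
  simp only [B_SQ]
  split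
  · positivity
  · split
    · positivity
    · split
      · positivity
      · exact le_refl 0

lemma B_Q_lastcol_pos (hp0 : 0 < p) (hp1 : p < 1) (hW : 1 ≤ W) (i : Fin (W + 1)) :
    0 < B_Q W p i ⟨W - 1, by omega⟩ := by
  have hq : (0:ℝ) < 1 - p := by linarith
  simp only [B_Q]
  split
  · positivity
  · split
    · have : (0:ℝ) < ((W - 1 : ℕ) : ℝ) + 1 := by positivity
      positivity
    · split
      · next h1 h2 h3 =>
        refine mul_pos (mul_pos ?_ (by positivity)) (by positivity)
        have : 1 ≤ (W - 1 : ℕ) + 1 - (i : ℕ) + 1 := by omega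
        exact_mod_cast Nat.cast_pos.mpr this
      · next h1 h2 h3 =>
        exfalso
        have := i.isLt
        omega

lemma B_SQ_lastcol_pos (hp0 : 0 < p) (hp1 : p < 1) (hW : 1 ≤ W) (i : Fin (W + 1)) :
    0 < B_SQ W p i ⟨W - 1, by omega⟩ := by
  have hq : (0:ℝ) < 1 - p := by linarith
  simp only [B_SQ]
  split
  · positivity
  · split
    · positivity
    · split
      · positivity
      · next h1 h2 h3 =>
        exfalso
        have := i.isLt
        omega

lemma dQ_pos (hp0 : 0 < p) (hp1 : p < 1) (hW : 1 ≤ W) (hθpos : ∀ k, 0 < θ k)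
    (i : Fin (W + 1)) : 0 < (B_Q W p *ᵥ θ) i := by
  simp only [Matrix.mulVec, dotProduct]
  apply Finset.sum_pos'
  · intro k _
    exact mul_nonneg (B_Q_nonneg hp0 hp1 i k) (hθpos k).le
  · exact ⟨⟨W - 1, by omega⟩, Finset.mem_univ _,
      mul_pos (B_Q_lastcol_pos hp0 hp1 hW i) (hθpos _)⟩

lemma dSQ_pos (hp0 : 0 < p) (hp1 : p < 1) (hW : 1 ≤ W) (hθpos : ∀ k, 0 < θ k)
    (i : Fin (W + 1)) : 0 < (B_SQ W p *ᵥ θ) i := by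
  simp only [Matrix.mulVec, dotProduct]
  apply Finset.sum_pos'
  · intro k _
    exact mul_nonneg (B_SQ_nonneg hp0 hp1 i k) (hθpos k).le
  · exact ⟨⟨W - 1, by omega⟩, Finset.mem_univ _,
      mul_pos (B_SQ_lastcol_pos hp0 hp1 hW i) (hθpos _)⟩

lemma BQ_inj (hp0 : 0 < p) (hp1 : p < 1) :
    ∀ x : Fin W → ℝ, B_Q W p *ᵥ x = 0 → x = 0 := by
  apply mulVec_zero_of_triangular
  · intro i k hik
    simp only [B_Q]
    rw [if_neg (by omega), if_neg (by omega), if_neg (by omega)]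
  · intro k
    simp only [B_Q]
    by_cases hk : (k : ℕ) = 0
    · rw [if_neg (by simp), if_pos (by simp [hk])]
      simp [hk]
      exact hp0.ne' 
    · rw [if_neg (by simp), if_neg (by simp; omega), if_pos (by simp)]
      simp only [show (k : ℕ) + 1 - ((⟨(k : ℕ) + 1, by omega⟩ : Fin (W + 1)) : ℕ) = 0 from by simp,
        show (k : ℕ) + 1 - ((⟨(k : ℕ) + 1, by omega⟩ : Fin (W + 1)) : ℕ) + 1 = 1 from by simp]
      norm_num
      exact hp0.ne' 

lemma BSQ_inj (hp0 : 0 < p) (hp1 : p < 1) :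
    ∀ x : Fin W → ℝ, B_SQ W p *ᵥ x = 0 → x = 0 := by
  apply mulVec_zero_of_triangular
  · intro i k hik
    simp only [B_SQ]
    rw [if_neg (by omega), if_neg (by omega), if_neg (by omega)]
  · intro k
    simp only [B_SQ]
    by_cases hk : (k : ℕ) = 0
    · rw [if_neg (by simp), if_pos (by simp [hk])]
      simp [hk]
      exact hp0.ne' 
    · rw [if_neg (by simp), if_neg (by simp; omega), if_pos (by simp)]
      simp only [show (k : ℕ) + 1 - ((⟨(k : ℕ) + 1, by omega⟩ : Fin (W + 1)) : ℕ) = 0 from by simp]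
      norm_num
      exact hp0.ne' 

end Dlemmas
noncomputable def bQval (p : ℝ) (n : ℕ) (c : ℕ) : ℝ :=
  if n = 0 then (1 - p) ^ (c + 1)
  else if n = 1 then (c + 1 : ℝ) * p * (1 - p) ^ c
  else if n ≤ c + 1 then (c + 1 - n + 1 : ℕ) * p ^ 2 * (1 - p) ^ (c + 1 - n)
  else 0

noncomputable def bSQval (p : ℝ) (n : ℕ) (c : ℕ) : ℝ :=
  if n = 0 then 1 - p
  else if n = 1 then p * (1 - p) ^ c
  else if n ≤ c + 1 then p ^ 2 * (1 - p) ^ (c + 1 - n)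
  else 0

lemma B_Q_eq {W : ℕ} {p : ℝ} (i : Fin (W + 1)) (k : Fin W) :
    B_Q W p i k = bQval p (i : ℕ) (k : ℕ) := rfl

lemma B_SQ_eq {W : ℕ} {p : ℝ} (i : Fin (W + 1)) (k : Fin W) :
    B_SQ W p i k = bSQval p (i : ℕ) (k : ℕ) := rfl

lemma bQval_zero_col {p : ℝ} {n c : ℕ} (h2 : 2 ≤ n) (hc : c + 1 < n) :
    bQval p n c = 0 := by
  unfold bQval
  rw [if_neg (by omega), if_neg (by omega), if_neg (by omega)]

lemma bSQval_zero_col {p : ℝ} {n c : ℕ} (h2 : 2 ≤ n) (hc : c + 1 < n) :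
    bSQval p n c = 0 := by
  unfold bSQval
  rw [if_neg (by omega), if_neg (by omega), if_neg (by omega)]

/-- splitting a five-point sparse sum -/
lemma sum_sparse5 {W : ℕ} (f : Fin W → ℝ) (a : ℕ) (c1 c2 c3 c4 c5 : ℝ) :
    (∑ k : Fin W, f k *
      (if (k : ℕ) = a then c1 else if (k : ℕ) = a + 1 then c2
       else if (k : ℕ) = a + 2 then c3 else if (k : ℕ) = a + 3 then c4
       else if (k : ℕ) = a + 4 then c5 else 0))
    = (if h : a < W then f ⟨a, h⟩ * c1 else 0)
      + (if h : a + 1 < W then f ⟨a + 1, h⟩ * c2 else 0)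
      + (if h : a + 2 < W then f ⟨a + 2, h⟩ * c3 else 0)
      + (if h : a + 3 < W then f ⟨a + 3, h⟩ * c4 else 0)
      + (if h : a + 4 < W then f ⟨a + 4, h⟩ * c5 else 0) := by
  have key : ∀ k : Fin W, f k *
      (if (k : ℕ) = a then c1 else if (k : ℕ) = a + 1 then c2
       else if (k : ℕ) = a + 2 then c3 else if (k : ℕ) = a + 3 then c4
       else if (k : ℕ) = a + 4 then c5 else 0)
      = (if (k : ℕ) = a then f k * c1 else 0)
        + ((if (k : ℕ) = a + 1 then f k * c2 else 0)
        + ((if (k : ℕ) = a + 2 then f k * c3 else 0)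
        + ((if (k : ℕ) = a + 3 then f k * c4 else 0)
        + (if (k : ℕ) = a + 4 then f k * c5 else 0)))) := by
    intro k
    by_cases e1 : (k : ℕ) = a
    · rw [if_pos e1, if_pos e1, if_neg (by omega), if_neg (by omega), if_neg (by omega),
        if_neg (by omega)]
      ring
    · rw [if_neg e1, if_neg e1]
      by_cases e2 : (k : ℕ) = a + 1
      · rw [if_pos e2, if_pos e2, if_neg (by omega), if_neg (by omega), if_neg (by omega)]
        ring
      · rw [if_neg e2, if_neg e2]
        by_cases e3 : (k : ℕ) = a + 2
        · rw [if_pos e3, if_pos e3, if_neg (by omega), if_neg (by omega)]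
          ring
        · rw [if_neg e3, if_neg e3]
          by_cases e4 : (k : ℕ) = a + 3
          · rw [if_pos e4, if_pos e4, if_neg (by omega)]
            ring
          · rw [if_neg e4, if_neg e4]
            by_cases e5 : (k : ℕ) = a + 4
            · rw [if_pos e5, if_pos e5]
              ring
            · rw [if_neg e5, if_neg e5]
              ring
  rw [Finset.sum_congr rfl (fun k _ => key k), Finset.sum_add_distrib, Finset.sum_add_distrib,
    Finset.sum_add_distrib, Finset.sum_add_distrib,
    sum_fin_indicator (fun k => f k * c1), sum_fin_indicator (fun k => f k * c2),
    sum_fin_indicator (fun k => f k * c3), sum_fin_indicator (fun k => f k * c4),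
    sum_fin_indicator (fun k => f k * c5)]
  ring

/-- splitting a three-point sparse sum -/
lemma sum_sparse3 {N : ℕ} (f : Fin N → ℝ) (a b c : ℕ) (hab : a < b) (hbc : b < c)
    (c1 c2 c3 : ℝ) :
    (∑ i : Fin N, f i *
      (if (i : ℕ) = a then c1 else if (i : ℕ) = b then c2
       else if (i : ℕ) = c then c3 else 0))
    = (if h : a < N then f ⟨a, h⟩ * c1 else 0)
      + (if h : b < N then f ⟨b, h⟩ * c2 else 0)
      + (if h : c < N then f ⟨c, h⟩ * c3 else 0) := by
  have key : ∀ i : Fin N, f i *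
      (if (i : ℕ) = a then c1 else if (i : ℕ) = b then c2
       else if (i : ℕ) = c then c3 else 0)
      = (if (i : ℕ) = a then f i * c1 else 0)
        + ((if (i : ℕ) = b then f i * c2 else 0)
        + (if (i : ℕ) = c then f i * c3 else 0)) := by
    intro i
    by_cases e1 : (i : ℕ) = a
    · rw [if_pos e1, if_pos e1, if_neg (by omega), if_neg (by omega)]
      ring
    · rw [if_neg e1, if_neg e1]
      by_cases e2 : (i : ℕ) = b
      · rw [if_pos e2, if_pos e2, if_neg (by omega)]
        ring
      · rw [if_neg e2, if_neg e2]
        by_cases e3 : (i : ℕ) = c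
        · rw [if_pos e3, if_pos e3]
          ring
        · rw [if_neg e3, if_neg e3]
          ring
  rw [Finset.sum_congr rfl (fun i _ => key i), Finset.sum_add_distrib, Finset.sum_add_distrib,
    sum_fin_indicator (fun i => f i * c1), sum_fin_indicator (fun i => f i * c2),
    sum_fin_indicator (fun i => f i * c3)]
  ring
noncomputable def xQ (W : ℕ) (p : ℝ) (θ : Fin W → ℝ) (a : ℕ) : Fin W → ℝ := fun k =>
  (if (k : ℕ) = a then (1 - p) ^ 2 * Tn W (1 - p) θ (a + 3)
   else if (k : ℕ) = a + 1 then
     -(2 * (1 - p) * (Tn W (1 - p) θ (a + 3) + (1 - p) ^ 2 * Tn W (1 - p) θ (a + 4)))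
   else if (k : ℕ) = a + 2 then
     Tn W (1 - p) θ (a + 3) + 4 * (1 - p) ^ 2 * Tn W (1 - p) θ (a + 4)
       + (1 - p) ^ 4 * Tn W (1 - p) θ (a + 5)
   else if (k : ℕ) = a + 3 then
     -(2 * (1 - p) * (Tn W (1 - p) θ (a + 4) + (1 - p) ^ 2 * Tn W (1 - p) θ (a + 5)))
   else if (k : ℕ) = a + 4 then (1 - p) ^ 2 * Tn W (1 - p) θ (a + 5)
   else 0) / p ^ 2

noncomputable def wQ (W : ℕ) (p : ℝ) (a : ℕ) : Fin (W + 1) → ℝ := fun i =>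
  (if (i : ℕ) = a + 3 then 1 else if (i : ℕ) = a + 4 then -(2 * (1 - p))
   else if (i : ℕ) = a + 5 then (1 - p) ^ 2 else 0) / p ^ 2

lemma QL1 {W : ℕ} {p : ℝ} {θ : Fin W → ℝ} {a : ℕ} (ha : a + 3 ≤ W) (i : Fin (W + 1)) :
    (B_Q W p *ᵥ xQ W p θ a) i = (B_Q W p *ᵥ θ) i * wQ W p a i := by
  have hconv : ∀ (c : ℕ) (v : ℝ), (W ≤ c → v = 0) →
      (if h : c < W then B_Q W p i ⟨c, h⟩ * v else 0) = bQval p (i : ℕ) c * v := by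
    intro c v hv
    split
    · next h => rw [B_Q_eq]
    · next h => rw [hv (by omega), mul_zero]
  have LHS_eq : (B_Q W p *ᵥ xQ W p θ a) i =
      (bQval p (i : ℕ) a * ((1 - p) ^ 2 * Tn W (1 - p) θ (a + 3))
      + bQval p (i : ℕ) (a + 1) *
          (-(2 * (1 - p) * (Tn W (1 - p) θ (a + 3) + (1 - p) ^ 2 * Tn W (1 - p) θ (a + 4))))
      + bQval p (i : ℕ) (a + 2) *
          (Tn W (1 - p) θ (a + 3) + 4 * (1 - p) ^ 2 * Tn W (1 - p) θ (a + 4)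
            + (1 - p) ^ 4 * Tn W (1 - p) θ (a + 5))
      + bQval p (i : ℕ) (a + 3) *
          (-(2 * (1 - p) * (Tn W (1 - p) θ (a + 4) + (1 - p) ^ 2 * Tn W (1 - p) θ (a + 5))))
      + bQval p (i : ℕ) (a + 4) * ((1 - p) ^ 2 * Tn W (1 - p) θ (a + 5))) * (p ^ 2)⁻¹ := by
    simp only [Matrix.mulVec, dotProduct, xQ, div_eq_mul_inv, ← mul_assoc]
    rw [← Finset.sum_mul, sum_sparse5]
    rw [hconv a _ (fun h => absurd h (by omega)),
      hconv (a + 1) _ (fun h => absurd h (by omega)),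
      hconv (a + 2) _ (fun h => absurd h (by omega)),
      hconv (a + 3) _ (fun h => by
        rw [Tn_vanish (a + 4) (by omega), Tn_vanish (a + 5) (by omega)]; ring),
      hconv (a + 4) _ (fun h => by rw [Tn_vanish (a + 5) (by omega)]; ring)]
    ring
  rw [LHS_eq]
  by_cases h0 : (i : ℕ) = 0
  · have hb : ∀ c, bQval p (i : ℕ) c = (1 - p) ^ (c + 1) := by
      intro c; unfold bQval; rw [if_pos h0]
    simp only [wQ]
    rw [if_neg (by omega), if_neg (by omega), if_neg (by omega), hb, hb, hb, hb, hb]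
    ring
  by_cases h1 : (i : ℕ) = 1
  · have hb : ∀ c, bQval p (i : ℕ) c = ((c : ℝ) + 1) * p * (1 - p) ^ c := by
      intro c; unfold bQval; rw [if_neg (by omega), if_pos h1]
    simp only [wQ]
    rw [if_neg (by omega), if_neg (by omega), if_neg (by omega), hb, hb, hb, hb, hb]
    push_cast
    ring
  have h2 : 2 ≤ (i : ℕ) := by omega
  have hbgen : ∀ c, (i : ℕ) ≤ c + 1 →
      bQval p (i : ℕ) c = ((c + 2 - (i : ℕ) : ℕ) : ℝ) * p ^ 2 * (1 - p) ^ (c + 1 - (i : ℕ)) := by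
    intro c hc
    unfold bQval
    rw [if_neg (by omega), if_neg (by omega), if_pos hc,
      show c + 1 - (i : ℕ) + 1 = c + 2 - (i : ℕ) from by omega]
  by_cases hle : (i : ℕ) ≤ a + 1
  · obtain ⟨t, ht⟩ : ∃ t, a + 1 = (i : ℕ) + t := ⟨a + 1 - (i : ℕ), by omega⟩
    have e1 : bQval p (i : ℕ) (a) = ((t:ℝ)+1) * p ^ 2 * (1 - p) ^ (t) := by
      rw [hbgen (a) (by omega), show a + 2 - (i : ℕ) = t+1 from by omega,
        show a + 1 - (i : ℕ) = t from by omega]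
      push_cast
      ring
    have e2 : bQval p (i : ℕ) (a + 1) = ((t:ℝ)+2) * p ^ 2 * (1 - p) ^ (t+1) := by
      rw [hbgen (a + 1) (by omega), show a + 1 + 2 - (i : ℕ) = t+2 from by omega,
        show a + 1 + 1 - (i : ℕ) = t+1 from by omega]
      push_cast
      ring
    have e3 : bQval p (i : ℕ) (a + 2) = ((t:ℝ)+3) * p ^ 2 * (1 - p) ^ (t+2) := by
      rw [hbgen (a + 2) (by omega), show a + 2 + 2 - (i : ℕ) = t+3 from by omega,
        show a + 2 + 1 - (i : ℕ) = t+2 from by omega]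
      push_cast
      ring
    have e4 : bQval p (i : ℕ) (a + 3) = ((t:ℝ)+4) * p ^ 2 * (1 - p) ^ (t+3) := by
      rw [hbgen (a + 3) (by omega), show a + 3 + 2 - (i : ℕ) = t+4 from by omega,
        show a + 3 + 1 - (i : ℕ) = t+3 from by omega]
      push_cast
      ring
    have e5 : bQval p (i : ℕ) (a + 4) = ((t:ℝ)+5) * p ^ 2 * (1 - p) ^ (t+4) := by
      rw [hbgen (a + 4) (by omega), show a + 4 + 2 - (i : ℕ) = t+5 from by omega,
        show a + 4 + 1 - (i : ℕ) = t+4 from by omega]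
      push_cast
      ring
    rw [e1, e2, e3, e4, e5]
    simp only [wQ]
    rw [if_neg (by omega), if_neg (by omega), if_neg (by omega)]
    ring
  by_cases hc2 : (i : ℕ) = a + 2
  · have e1 : bQval p (i : ℕ) (a) = 0 := bQval_zero_col h2 (by omega)
    have e2 : bQval p (i : ℕ) (a + 1) = ((1:ℝ)) * p ^ 2 * (1 - p) ^ (0) := by
      rw [hbgen (a + 1) (by omega), show a + 1 + 2 - (i : ℕ) = 1 from by omega,
        show a + 1 + 1 - (i : ℕ) = 0 from by omega]
      push_cast
      ring
    have e3 : bQval p (i : ℕ) (a + 2) = ((2:ℝ)) * p ^ 2 * (1 - p) ^ (1) := by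
      rw [hbgen (a + 2) (by omega), show a + 2 + 2 - (i : ℕ) = 2 from by omega,
        show a + 2 + 1 - (i : ℕ) = 1 from by omega]
      push_cast
      ring
    have e4 : bQval p (i : ℕ) (a + 3) = ((3:ℝ)) * p ^ 2 * (1 - p) ^ (2) := by
      rw [hbgen (a + 3) (by omega), show a + 3 + 2 - (i : ℕ) = 3 from by omega,
        show a + 3 + 1 - (i : ℕ) = 2 from by omega]
      push_cast
      ring
    have e5 : bQval p (i : ℕ) (a + 4) = ((4:ℝ)) * p ^ 2 * (1 - p) ^ (3) := by
      rw [hbgen (a + 4) (by omega), show a + 4 + 2 - (i : ℕ) = 4 from by omega,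
        show a + 4 + 1 - (i : ℕ) = 3 from by omega]
      push_cast
      ring
    rw [e1, e2, e3, e4, e5]
    simp only [wQ]
    rw [if_neg (by omega), if_neg (by omega), if_neg (by omega)]
    ring
  by_cases hc3 : (i : ℕ) = a + 3
  · have e1 : bQval p (i : ℕ) (a) = 0 := bQval_zero_col h2 (by omega)
    have e2 : bQval p (i : ℕ) (a + 1) = 0 := bQval_zero_col h2 (by omega)
    have e3 : bQval p (i : ℕ) (a + 2) = ((1:ℝ)) * p ^ 2 * (1 - p) ^ (0) := by
      rw [hbgen (a + 2) (by omega), show a + 2 + 2 - (i : ℕ) = 1 from by omega,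
        show a + 2 + 1 - (i : ℕ) = 0 from by omega]
      push_cast
      ring
    have e4 : bQval p (i : ℕ) (a + 3) = ((2:ℝ)) * p ^ 2 * (1 - p) ^ (1) := by
      rw [hbgen (a + 3) (by omega), show a + 3 + 2 - (i : ℕ) = 2 from by omega,
        show a + 3 + 1 - (i : ℕ) = 1 from by omega]
      push_cast
      ring
    have e5 : bQval p (i : ℕ) (a + 4) = ((3:ℝ)) * p ^ 2 * (1 - p) ^ (2) := by
      rw [hbgen (a + 4) (by omega), show a + 4 + 2 - (i : ℕ) = 3 from by omega,
        show a + 4 + 1 - (i : ℕ) = 2 from by omega]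
      push_cast
      ring
    rw [e1, e2, e3, e4, e5, dQ_eval i h2, hc3]
    simp only [wQ]
    rw [if_pos hc3]
    ring
  by_cases hc4 : (i : ℕ) = a + 4
  · have e1 : bQval p (i : ℕ) (a) = 0 := bQval_zero_col h2 (by omega)
    have e2 : bQval p (i : ℕ) (a + 1) = 0 := bQval_zero_col h2 (by omega)
    have e3 : bQval p (i : ℕ) (a + 2) = 0 := bQval_zero_col h2 (by omega)
    have e4 : bQval p (i : ℕ) (a + 3) = ((1:ℝ)) * p ^ 2 * (1 - p) ^ (0) := by
      rw [hbgen (a + 3) (by omega), show a + 3 + 2 - (i : ℕ) = 1 from by omega,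
        show a + 3 + 1 - (i : ℕ) = 0 from by omega]
      push_cast
      ring
    have e5 : bQval p (i : ℕ) (a + 4) = ((2:ℝ)) * p ^ 2 * (1 - p) ^ (1) := by
      rw [hbgen (a + 4) (by omega), show a + 4 + 2 - (i : ℕ) = 2 from by omega,
        show a + 4 + 1 - (i : ℕ) = 1 from by omega]
      push_cast
      ring
    rw [e1, e2, e3, e4, e5, dQ_eval i h2, hc4]
    simp only [wQ]
    rw [if_neg (by omega), if_pos hc4]
    ring
  by_cases hc5 : (i : ℕ) = a + 5
  · have e1 : bQval p (i : ℕ) (a) = 0 := bQval_zero_col h2 (by omega)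
    have e2 : bQval p (i : ℕ) (a + 1) = 0 := bQval_zero_col h2 (by omega)
    have e3 : bQval p (i : ℕ) (a + 2) = 0 := bQval_zero_col h2 (by omega)
    have e4 : bQval p (i : ℕ) (a + 3) = 0 := bQval_zero_col h2 (by omega)
    have e5 : bQval p (i : ℕ) (a + 4) = ((1:ℝ)) * p ^ 2 * (1 - p) ^ (0) := by
      rw [hbgen (a + 4) (by omega), show a + 4 + 2 - (i : ℕ) = 1 from by omega,
        show a + 4 + 1 - (i : ℕ) = 0 from by omega]
      push_cast
      ring
    rw [e1, e2, e3, e4, e5, dQ_eval i h2, hc5]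
    simp only [wQ]
    rw [if_neg (by omega), if_neg (by omega), if_pos hc5]
    ring
  · rw [bQval_zero_col h2 (by omega), bQval_zero_col h2 (by omega),
      bQval_zero_col h2 (by omega), bQval_zero_col h2 (by omega),
      bQval_zero_col h2 (by omega)]
    simp only [wQ]
    rw [if_neg (by omega), if_neg (by omega), if_neg (by omega)]
    ring
lemma QL2 {W : ℕ} {p : ℝ} {a : ℕ} (hp0 : p ≠ 0) (ha : a + 3 ≤ W) (j : Fin W)
    (hj : (j : ℕ) = a + 2) :
    (B_Q W p)ᵀ *ᵥ wQ W p a = Pi.single j 1 := by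
  funext k
  have hkW := k.isLt
  have main : ((B_Q W p)ᵀ *ᵥ wQ W p a) k =
      (bQval p (a + 3) (k : ℕ) * 1 + bQval p (a + 4) (k : ℕ) * (-(2 * (1 - p)))
        + bQval p (a + 5) (k : ℕ) * (1 - p) ^ 2) * (p ^ 2)⁻¹ := by
    simp only [Matrix.mulVec, dotProduct, Matrix.transpose_apply, wQ, div_eq_mul_inv,
      ← mul_assoc]
    rw [← Finset.sum_mul, sum_sparse3 _ (a + 3) (a + 4) (a + 5) (by omega) (by omega)]
    have hconv2 : ∀ (c : ℕ) (v : ℝ), 2 ≤ c →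
        (if h : c < W + 1 then B_Q W p ⟨c, h⟩ k * v else 0) = bQval p c (k : ℕ) * v := by
      intro c v hc
      split
      · next h => rw [B_Q_eq]
      · next h => rw [bQval_zero_col hc (by omega), zero_mul]
    rw [hconv2 (a + 3) _ (by omega), hconv2 (a + 4) _ (by omega), hconv2 (a + 5) _ (by omega)]
  rw [main, Pi.single_apply]
  rcases lt_trichotomy ((k : ℕ)) (a + 2) with hlt | heq | hgt
  · rw [bQval_zero_col (by omega) (by omega), bQval_zero_col (by omega) (by omega),
      bQval_zero_col (by omega) (by omega), if_neg (fun he => by rw [he] at hlt; omega)]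
    ring
  · have hkj : k = j := Fin.ext (by omega)
    have e1 : bQval p (a + 3) (k : ℕ) = p ^ 2 := by
      unfold bQval
      rw [if_neg (by omega), if_neg (by omega), if_pos (by omega),
        show (k : ℕ) + 1 - (a + 3) + 1 = 1 from by omega,
        show (k : ℕ) + 1 - (a + 3) = 0 from by omega]
      norm_num
    rw [e1, bQval_zero_col (by omega) (by omega), bQval_zero_col (by omega) (by omega),
      if_pos hkj]
    field_simp
    ring
  · obtain ⟨u, hu⟩ : ∃ u, (k : ℕ) = a + 3 + u := ⟨(k : ℕ) - (a + 3), by omega⟩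
    rw [if_neg (fun he => by rw [he] at hgt; omega)]
    by_cases hu0 : u = 0
    · have e1 : bQval p (a + 3) (k : ℕ) = 2 * p ^ 2 * (1 - p) := by
        unfold bQval
        rw [if_neg (by omega), if_neg (by omega), if_pos (by omega),
          show (k : ℕ) + 1 - (a + 3) + 1 = 2 from by omega,
          show (k : ℕ) + 1 - (a + 3) = 1 from by omega]
        norm_num
      have e2 : bQval p (a + 4) (k : ℕ) = p ^ 2 := by
        unfold bQval
        rw [if_neg (by omega), if_neg (by omega), if_pos (by omega),
          show (k : ℕ) + 1 - (a + 4) + 1 = 1 from by omega,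
          show (k : ℕ) + 1 - (a + 4) = 0 from by omega]
        norm_num
      rw [e1, e2, bQval_zero_col (by omega) (by omega)]
      ring
    · obtain ⟨v, hv⟩ : ∃ v, u = v + 1 := ⟨u - 1, by omega⟩
      have e1 : bQval p (a + 3) (k : ℕ) = ((v : ℝ) + 3) * p ^ 2 * (1 - p) ^ (v + 2) := by
        unfold bQval
        rw [if_neg (by omega), if_neg (by omega), if_pos (by omega),
          show (k : ℕ) + 1 - (a + 3) + 1 = v + 3 from by omega,
          show (k : ℕ) + 1 - (a + 3) = v + 2 from by omega]
        push_cast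
        ring
      have e2 : bQval p (a + 4) (k : ℕ) = ((v : ℝ) + 2) * p ^ 2 * (1 - p) ^ (v + 1) := by
        unfold bQval
        rw [if_neg (by omega), if_neg (by omega), if_pos (by omega),
          show (k : ℕ) + 1 - (a + 4) + 1 = v + 2 from by omega,
          show (k : ℕ) + 1 - (a + 4) = v + 1 from by omega]
        push_cast
        ring
      have e3 : bQval p (a + 5) (k : ℕ) = ((v : ℝ) + 1) * p ^ 2 * (1 - p) ^ v := by
        unfold bQval
        rw [if_neg (by omega), if_neg (by omega), if_pos (by omega),
          show (k : ℕ) + 1 - (a + 5) + 1 = v + 1 from by omega,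
          show (k : ℕ) + 1 - (a + 5) = v from by omega]
        push_cast
        ring
      rw [e1, e2, e3]
      ring
noncomputable def xSQ (W : ℕ) (p : ℝ) (θ : Fin W → ℝ) (a : ℕ) (tj : ℝ) : Fin W → ℝ := fun k =>
  (if (k : ℕ) = a + 1 then -((1 - p) * Sn W (1 - p) θ (a + 3))
   else if (k : ℕ) = a + 2 then Sn W (1 - p) θ (a + 3) + (1 - p) ^ 2 * Sn W (1 - p) θ (a + 4)
   else if (k : ℕ) = a + 3 then -((1 - p) * Sn W (1 - p) θ (a + 4))
   else 0) / p ^ 2 - (1 - p) / p * tj * θ k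

noncomputable def wSQ (W : ℕ) (p : ℝ) (a : ℕ) (tj : ℝ) : Fin (W + 1) → ℝ := fun i =>
  (if (i : ℕ) = 0 then tj * p else if (i : ℕ) = a + 3 then 1
   else if (i : ℕ) = a + 4 then -(1 - p) else 0) / p ^ 2 - (1 - p) / p * tj

lemma colsum_SQ {W : ℕ} {p : ℝ} (hp0 : p ≠ 0) (k : Fin W) :
    ∑ i : Fin (W + 1), B_SQ W p i k = 1 := by
  have hkW := k.isLt
  have h1 : ∑ i : Fin (W + 1), B_SQ W p i k
      = ∑ n ∈ Finset.range (W + 1), bSQval p n (k : ℕ) := by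
    simp only [B_SQ_eq]
    exact Fin.sum_univ_eq_sum_range (fun n => bSQval p n (k : ℕ)) (W + 1)
  rw [h1]
  have h2 : ∑ n ∈ Finset.range (W + 1), bSQval p n (k : ℕ)
      = ∑ n ∈ Finset.range ((k : ℕ) + 2), bSQval p n (k : ℕ) := by
    symm
    apply Finset.sum_subset (Finset.range_subset_range.mpr (by omega))
    intro x hx hnx
    simp only [Finset.mem_range, not_lt] at hnx
    exact bSQval_zero_col (by omega) (by omega)
  rw [h2, ← Finset.sum_range_reflect]
  have h3 : ∀ n ∈ Finset.range ((k : ℕ) + 2), bSQval p ((k : ℕ) + 2 - 1 - n) (k : ℕ)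
      = if n = (k : ℕ) + 1 then 1 - p
        else if n = (k : ℕ) then p * (1 - p) ^ (k : ℕ) else p ^ 2 * (1 - p) ^ n := by
    intro n hn
    simp only [Finset.mem_range] at hn
    by_cases e1 : n = (k : ℕ) + 1
    · rw [if_pos e1, show (k : ℕ) + 2 - 1 - n = 0 from by omega]
      unfold bSQval
      rw [if_pos rfl]
    · rw [if_neg e1]
      by_cases e2 : n = (k : ℕ)
      · rw [if_pos e2, show (k : ℕ) + 2 - 1 - n = 1 from by omega]
        unfold bSQval
        rw [if_neg one_ne_zero, if_pos rfl]
    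
      · rw [if_neg e2]
        unfold bSQval
        rw [if_neg (by omega), if_neg (by omega), if_pos (by omega),
          show (k : ℕ) + 1 - ((k : ℕ) + 2 - 1 - n) = n from by omega]
  rw [Finset.sum_congr rfl h3, Finset.sum_range_succ, Finset.sum_range_succ, if_pos rfl,
    if_neg (by omega), if_pos rfl]
  have h4 : ∀ n ∈ Finset.range (k : ℕ),
      (if n = (k : ℕ) + 1 then 1 - p
        else if n = (k : ℕ) then p * (1 - p) ^ (k : ℕ) else p ^ 2 * (1 - p) ^ n)
      = p ^ 2 * (1 - p) ^ n := by
    intro n hn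
    simp only [Finset.mem_range] at hn
    rw [if_neg (by omega), if_neg (by omega)]
  rw [Finset.sum_congr rfl h4, ← Finset.mul_sum,
    geom_sum_eq (fun h => hp0 (by linarith [h] : p = 0)) (k : ℕ)]
  have key : ((1 - p) ^ (k : ℕ) - 1) / ((1 - p) - 1) = -(((1 - p) ^ (k : ℕ) - 1) / p) := by
    rw [show (1 - p) - 1 = -p from by ring, div_neg]
  rw [key]
  field_simp
  ring

lemma SL1 {W : ℕ} {p : ℝ} {θ : Fin W → ℝ} {a : ℕ} (hp0 : p ≠ 0) (ha : a + 3 ≤ W)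
    (j : Fin W) (hj : (j : ℕ) = a + 2) (hθsum : ∑ k, θ k = 1) (i : Fin (W + 1)) :
    (B_SQ W p *ᵥ xSQ W p θ a (θ j)) i = (B_SQ W p *ᵥ θ) i * wSQ W p a (θ j) i := by
  have hrec : Sn W (1 - p) θ (a + 3) = θ j + (1 - p) * Sn W (1 - p) θ (a + 4) := by
    have := Sn_rec (q := 1 - p) (θ := θ) j
    rw [hj] at this
    exact this
  have hconv : ∀ (c : ℕ) (v : ℝ), (W ≤ c → v = 0) →
      (if h : c < W then B_SQ W p i ⟨c, h⟩ * v else 0) = bSQval p (i : ℕ) c * v := by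
    intro c v hv
    split
    · next h => rw [B_SQ_eq]
    · next h => rw [hv (by omega), mul_zero]
  have split : (B_SQ W p *ᵥ xSQ W p θ a (θ j)) i =
      (bSQval p (i : ℕ) (a + 1) * (-((1 - p) * Sn W (1 - p) θ (a + 3)))
        + bSQval p (i : ℕ) (a + 2) *
            (Sn W (1 - p) θ (a + 3) + (1 - p) ^ 2 * Sn W (1 - p) θ (a + 4))
        + bSQval p (i : ℕ) (a + 3) * (-((1 - p) * Sn W (1 - p) θ (a + 4)))) * (p ^ 2)⁻¹
      - (1 - p) / p * θ j * (B_SQ W p *ᵥ θ) i := by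
    simp only [Matrix.mulVec, dotProduct, xSQ]
    rw [Finset.sum_congr rfl (fun k _ =>
      (by ring : B_SQ W p i k *
        ((if (k : ℕ) = a + 1 then -((1 - p) * Sn W (1 - p) θ (a + 3))
          else if (k : ℕ) = a + 2 then
            Sn W (1 - p) θ (a + 3) + (1 - p) ^ 2 * Sn W (1 - p) θ (a + 4)
          else if (k : ℕ) = a + 3 then -((1 - p) * Sn W (1 - p) θ (a + 4))
          else 0) / p ^ 2 - (1 - p) / p * θ j * θ k)
        = B_SQ W p i k *
          (if (k : ℕ) = a + 1 then -((1 - p) * Sn W (1 - p) θ (a + 3))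
          else if (k : ℕ) = a + 2 then
            Sn W (1 - p) θ (a + 3) + (1 - p) ^ 2 * Sn W (1 - p) θ (a + 4)
          else if (k : ℕ) = a + 3 then -((1 - p) * Sn W (1 - p) θ (a + 4))
          else 0) * (p ^ 2)⁻¹ - (1 - p) / p * θ j * (B_SQ W p i k * θ k))),
      Finset.sum_sub_distrib, ← Finset.sum_mul, ← Finset.mul_sum,
      sum_sparse3 _ (a + 1) (a + 2) (a + 3) (by omega) (by omega),
      hconv (a + 1) _ (fun h => absurd h (by omega)),
      hconv (a + 2) _ (fun h => absurd h (by omega)),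
      hconv (a + 3) _ (fun h => by rw [Sn_vanish (a + 4) (by omega)]; ring)]
  rw [split]
  simp only [wSQ]
  by_cases h0 : (i : ℕ) = 0
  · have hb : ∀ c, bSQval p (i : ℕ) c = 1 - p := by
      intro c; unfold bSQval; rw [if_pos h0]
    rw [hb, hb, hb, if_pos h0, dSQ_eval0 i h0 hθsum]
    linear_combination ((1 - p) * (p ^ 2)⁻¹ * p) * hrec
  by_cases h1 : (i : ℕ) = 1
  · have hb : ∀ c, bSQval p (i : ℕ) c = p * (1 - p) ^ c := by
      intro c; unfold bSQval; rw [if_neg (by omega), if_pos h1]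
    rw [hb, hb, hb, if_neg (by omega), if_neg (by omega), if_neg (by omega)]
    ring
  have h2 : 2 ≤ (i : ℕ) := by omega
  have hbgen : ∀ c, (i : ℕ) ≤ c + 1 →
      bSQval p (i : ℕ) c = p ^ 2 * (1 - p) ^ (c + 1 - (i : ℕ)) := by
    intro c hc
    unfold bSQval
    rw [if_neg (by omega), if_neg (by omega), if_pos hc]
  by_cases hle : (i : ℕ) ≤ a + 2
  · obtain ⟨t, ht⟩ : ∃ t, a + 2 = (i : ℕ) + t := ⟨a + 2 - (i : ℕ), by omega⟩
    have e1 : bSQval p (i : ℕ) (a + 1) = p ^ 2 * (1 - p) ^ t := by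
      rw [hbgen (a + 1) (by omega), show a + 1 + 1 - (i : ℕ) = t from by omega]
    have e2 : bSQval p (i : ℕ) (a + 2) = p ^ 2 * (1 - p) ^ (t + 1) := by
      rw [hbgen (a + 2) (by omega), show a + 2 + 1 - (i : ℕ) = t + 1 from by omega]
    have e3 : bSQval p (i : ℕ) (a + 3) = p ^ 2 * (1 - p) ^ (t + 2) := by
      rw [hbgen (a + 3) (by omega), show a + 3 + 1 - (i : ℕ) = t + 2 from by omega]
    rw [e1, e2, e3, if_neg (by omega), if_neg (by omega), if_neg (by omega)]
    ring
  by_cases hc3 : (i : ℕ) = a + 3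
  · have e1 : bSQval p (i : ℕ) (a + 1) = 0 := bSQval_zero_col h2 (by omega)
    have e2 : bSQval p (i : ℕ) (a + 2) = p ^ 2 * (1 - p) ^ 0 := by
      rw [hbgen (a + 2) (by omega), show a + 2 + 1 - (i : ℕ) = 0 from by omega]
    have e3 : bSQval p (i : ℕ) (a + 3) = p ^ 2 * (1 - p) ^ 1 := by
      rw [hbgen (a + 3) (by omega), show a + 3 + 1 - (i : ℕ) = 1 from by omega]
    rw [e1, e2, e3, if_neg (by omega), if_pos hc3, dSQ_eval i h2, hc3]
    ring
  by_cases hc4 : (i : ℕ) = a + 4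
  · have e1 : bSQval p (i : ℕ) (a + 1) = 0 := bSQval_zero_col h2 (by omega)
    have e2 : bSQval p (i : ℕ) (a + 2) = 0 := bSQval_zero_col h2 (by omega)
    have e3 : bSQval p (i : ℕ) (a + 3) = p ^ 2 * (1 - p) ^ 0 := by
      rw [hbgen (a + 3) (by omega), show a + 3 + 1 - (i : ℕ) = 0 from by omega]
    rw [e1, e2, e3, if_neg (by omega), if_neg (by omega), if_pos hc4, dSQ_eval i h2, hc4]
    ring
  · rw [bSQval_zero_col h2 (by omega), bSQval_zero_col h2 (by omega),
      bSQval_zero_col h2 (by omega), if_neg (by omega), if_neg (by omega), if_neg (by omega)]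
    ring

lemma SL2 {W : ℕ} {p : ℝ} {θ : Fin W → ℝ} {a : ℕ} (hp0 : p ≠ 0) (ha : a + 3 ≤ W)
    (j : Fin W) (hj : (j : ℕ) = a + 2) :
    (B_SQ W p)ᵀ *ᵥ wSQ W p a (θ j) = Pi.single j 1 := by
  funext k
  have hkW := k.isLt
  have main : ((B_SQ W p)ᵀ *ᵥ wSQ W p a (θ j)) k =
      ((1 - p) * (θ j * p) + bSQval p (a + 3) (k : ℕ) * 1
        + bSQval p (a + 4) (k : ℕ) * (-(1 - p))) * (p ^ 2)⁻¹
      - (1 - p) / p * θ j := by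
    simp only [Matrix.mulVec, dotProduct, Matrix.transpose_apply, wSQ]
    rw [Finset.sum_congr rfl (fun i _ =>
      (by ring : B_SQ W p i k *
        ((if (i : ℕ) = 0 then θ j * p else if (i : ℕ) = a + 3 then 1
          else if (i : ℕ) = a + 4 then -(1 - p) else 0) / p ^ 2 - (1 - p) / p * θ j)
        = B_SQ W p i k *
          (if (i : ℕ) = 0 then θ j * p else if (i : ℕ) = a + 3 then 1
          else if (i : ℕ) = a + 4 then -(1 - p) else 0) * (p ^ 2)⁻¹
          - (1 - p) / p * θ j * B_SQ W p i k)),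
      Finset.sum_sub_distrib, ← Finset.sum_mul, ← Finset.mul_sum,
      sum_sparse3 _ 0 (a + 3) (a + 4) (by omega) (by omega), colsum_SQ hp0 k, mul_one]
    have hconv2 : ∀ (c : ℕ) (v : ℝ), 2 ≤ c →
        (if h : c < W + 1 then B_SQ W p ⟨c, h⟩ k * v else 0) = bSQval p c (k : ℕ) * v := by
      intro c v hc
      split
      · next h => rw [B_SQ_eq]
      · next h => rw [bSQval_zero_col hc (by omega), zero_mul]
    rw [hconv2 (a + 3) _ (by omega), hconv2 (a + 4) _ (by omega), dif_pos (by omega : 0 < W + 1)]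
    have hB0 : B_SQ W p ⟨0, by omega⟩ k = 1 - p := by
      unfold B_SQ
      rw [if_pos rfl]
    rw [hB0]
  rw [main, Pi.single_apply]
  rcases lt_trichotomy ((k : ℕ)) (a + 2) with hlt | heq | hgt
  · rw [bSQval_zero_col (by omega) (by omega), bSQval_zero_col (by omega) (by omega),
      if_neg (fun he => by rw [he] at hlt; omega)]
    field_simp
    ring
  · have hkj : k = j := Fin.ext (by omega)
    have e1 : bSQval p (a + 3) (k : ℕ) = p ^ 2 := by
      unfold bSQval
      rw [if_neg (by omega), if_neg (by omega), if_pos (by omega),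
        show (k : ℕ) + 1 - (a + 3) = 0 from by omega]
      norm_num
    rw [e1, bSQval_zero_col (by omega) (by omega), if_pos hkj]
    field_simp
    ring
  · obtain ⟨u, hu⟩ : ∃ u, (k : ℕ) = a + 3 + u := ⟨(k : ℕ) - (a + 3), by omega⟩
    have e1 : bSQval p (a + 3) (k : ℕ) = p ^ 2 * (1 - p) ^ (u + 1) := by
      unfold bSQval
      rw [if_neg (by omega), if_neg (by omega), if_pos (by omega),
        show (k : ℕ) + 1 - (a + 3) = u + 1 from by omega]
    have e2 : bSQval p (a + 4) (k : ℕ) = p ^ 2 * (1 - p) ^ u := by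
      unfold bSQval
      rw [if_neg (by omega), if_neg (by omega), if_pos (by omega),
        show (k : ℕ) + 1 - (a + 4) = u from by omega]
    rw [e1, e2, if_neg (fun he => by rw [he] at hgt; omega)]
    field_simp
    ring
lemma fisher_solve {W : ℕ} (B : Matrix (Fin (W + 1)) (Fin W) ℝ) (θ : Fin W → ℝ)
    (hd : ∀ i, 0 < (B *ᵥ θ) i) (x : Fin W → ℝ) (w : Fin (W + 1) → ℝ) (j : Fin W)
    (h1 : ∀ i, (B *ᵥ x) i = (B *ᵥ θ) i * w i) (h2 : Bᵀ *ᵥ w = Pi.single j 1) :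
    fisherInfo B θ *ᵥ x = Pi.single j 1 := by
  unfold fisherInfo
  rw [← Matrix.mulVec_mulVec, ← Matrix.mulVec_mulVec]
  have hmid : Matrix.diagonal (fun j => ((B *ᵥ θ) j)⁻¹) *ᵥ (B *ᵥ x) = w := by
    funext i
    rw [Matrix.mulVec_diagonal, h1 i, inv_mul_cancel_left₀ (hd i).ne']
  rw [hmid, h2]

/-- For every flow size `j` with `3 ≤ j ≤ W` (equal PPR parameter `p`),
the PS+SYN+SEQ CRLB diagonal is at most the PS+SEQ one:
`(J_SQ⁻¹)_{jj} ≤ (J_Q⁻¹)_{jj}`. Lean index `j : Fin W` corresponds to size `j+1`,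
so the range `3 ≤ j ≤ W` is `2 ≤ (j : ℕ)`. -/
theorem stmt_15 (W : ℕ) (hW : 3 ≤ W)
    (θ : Fin W → ℝ) (hθpos : ∀ k, 0 < θ k) (hθsum : ∑ k, θ k = 1)
    (p : ℝ) (hp0 : 0 < p) (hp1 : p < 1) :
    ∀ j : Fin W, 2 ≤ (j : ℕ) →
      (fisherInfo (B_SQ W p) θ)⁻¹ j j ≤ (fisherInfo (B_Q W p) θ)⁻¹ j j := by
  intro j hj
  obtain ⟨a, haj⟩ : ∃ a, (j : ℕ) = a + 2 := ⟨(j : ℕ) - 2, by omega⟩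
  have hjW := j.isLt
  have ha : a + 3 ≤ W := by omega
  have hp0' : p ≠ 0 := hp0.ne'
  have hq0 : (0:ℝ) ≤ 1 - p := by linarith
  have hθ0 : ∀ k, 0 ≤ θ k := fun k => (hθpos k).le
  have hdQ : ∀ i, 0 < (B_Q W p *ᵥ θ) i := dQ_pos hp0 hp1 (by omega) hθpos
  have hdSQ : ∀ i, 0 < (B_SQ W p *ᵥ θ) i := dSQ_pos hp0 hp1 (by omega) hθpos
  have pdQ := fisher_posdef (B_Q W p) θ hdQ (BQ_inj hp0 hp1)
  have pdSQ := fisher_posdef (B_SQ W p) θ hdSQ (BSQ_inj hp0 hp1)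
  have hdetQ : IsUnit (fisherInfo (B_Q W p) θ).det := pdQ.det_pos.ne'.isUnit
  have hdetSQ : IsUnit (fisherInfo (B_SQ W p) θ).det := pdSQ.det_pos.ne'.isUnit
  have hsolQ : fisherInfo (B_Q W p) θ *ᵥ xQ W p θ a = Pi.single j 1 :=
    fisher_solve _ _ hdQ _ _ j (QL1 ha) (QL2 hp0' ha j haj)
  have hsolSQ : fisherInfo (B_SQ W p) θ *ᵥ xSQ W p θ a (θ j) = Pi.single j 1 :=
    fisher_solve _ _ hdSQ _ _ j (SL1 hp0' ha j haj hθsum) (SL2 hp0' ha j haj)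
  rw [inv_diag_of_solve _ hdetQ _ j hsolQ, inv_diag_of_solve _ hdetSQ _ j hsolSQ]
  have hxQ : xQ W p θ a j =
      (Tn W (1 - p) θ (a + 3) + 4 * (1 - p) ^ 2 * Tn W (1 - p) θ (a + 4)
        + (1 - p) ^ 4 * Tn W (1 - p) θ (a + 5)) / p ^ 2 := by
    unfold xQ
    rw [if_neg (by omega), if_neg (by omega), if_pos haj]
  have hxSQ : xSQ W p θ a (θ j) j =
      (Sn W (1 - p) θ (a + 3) + (1 - p) ^ 2 * Sn W (1 - p) θ (a + 4)) / p ^ 2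
        - (1 - p) / p * θ j * θ j := by
    unfold xSQ
    rw [if_neg (by omega), if_pos haj]
  rw [hxQ, hxSQ]
  have h3 : Sn W (1 - p) θ (a + 3) ≤ Tn W (1 - p) θ (a + 3) := Sn_le_Tn hq0 hθ0 _
  have h4s : Sn W (1 - p) θ (a + 4) ≤ Tn W (1 - p) θ (a + 4) := Sn_le_Tn hq0 hθ0 _
  have h4T : 0 ≤ Tn W (1 - p) θ (a + 4) := Tn_nonneg hq0 hθ0 _
  have h5 : 0 ≤ Tn W (1 - p) θ (a + 5) := Tn_nonneg hq0 hθ0 _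
  have hp2 : (0:ℝ) < p ^ 2 := by positivity
  have hsub : 0 ≤ (1 - p) / p * θ j * θ j :=
    mul_nonneg (mul_nonneg (div_nonneg hq0 hp0.le) (hθ0 j)) (hθ0 j)
  have hnum : Sn W (1 - p) θ (a + 3) + (1 - p) ^ 2 * Sn W (1 - p) θ (a + 4)
      ≤ Tn W (1 - p) θ (a + 3) + 4 * (1 - p) ^ 2 * Tn W (1 - p) θ (a + 4)
        + (1 - p) ^ 4 * Tn W (1 - p) θ (a + 5) := by
    have hA : (1 - p) ^ 2 * Sn W (1 - p) θ (a + 4) ≤ (1 - p) ^ 2 * Tn W (1 - p) θ (a + 4) :=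
      mul_le_mul_of_nonneg_left h4s (sq_nonneg _)
    have hB : 0 ≤ (1 - p) ^ 2 * Tn W (1 - p) θ (a + 4) := mul_nonneg (sq_nonneg _) h4T
    have hC : 0 ≤ (1 - p) ^ 4 * Tn W (1 - p) θ (a + 5) :=
      mul_nonneg (by positivity) h5
    linarith
  calc (Sn W (1 - p) θ (a + 3) + (1 - p) ^ 2 * Sn W (1 - p) θ (a + 4)) / p ^ 2
        - (1 - p) / p * θ j * θ j
      ≤ (Sn W (1 - p) θ (a + 3) + (1 - p) ^ 2 * Sn W (1 - p) θ (a + 4)) / p ^ 2 :=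
        sub_le_self _ hsub
    _ ≤ (Tn W (1 - p) θ (a + 3) + 4 * (1 - p) ^ 2 * Tn W (1 - p) θ (a + 4)
        + (1 - p) ^ 4 * Tn W (1 - p) θ (a + 5)) / p ^ 2 := by gcongr ?_ / p ^ 2
end

section
/- Fix W ≥ 2, a flow size distribution θ ∈ ℝ^W with θ_k > 0 and Σθ_k = 1, and parameters 0 < p_p ≤ p < 1. Let J_FS(p) be the flow sampling Fisher information (from the sampling matrix with row 0 entries 1−p and B̃ = p·I_W) and let J_SH(p_p) be the Sample and Hold Fisher information (from the sampling matrix with row 0 entries (1−p_p)^k and b_{jk} = p_p (1−p_p)^{k−j} for 1 ≤ j ≤ k ≤ W). Then: (a) for every 2 ≤ j ≤ W, (J_FS(p)⁻¹)_{jj} ≤ (J_SH(p_p)⁻¹)_{jj}; (b) if W = 2, or if W > 2 and θ₂ ≥ θ₁(1−θ₁), then also (J_FS(p)⁻¹)_{11} ≤ (J_SH(p_p)⁻¹)_{11}; (c) for any θ there exists p₀ ∈ (0,1) such that (J_FS(p)⁻¹)_{11} ≤ (J_SH(p_p)⁻¹)_{11} whenever 0 < p_p ≤ p ≤ p₀.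 -/
open Matrix

/-- Flow sampling (FS) matrix with parameter `p`: row `0` entries `1 − p`,
`b_{jk} = p` iff `j = k`, zero otherwise (column `k : Fin W` is flow size `k+1`). -/
noncomputable def B_FS (W : ℕ) (p : ℝ) : Matrix (Fin (W + 1)) (Fin W) ℝ :=
  fun j k =>
    if (j : ℕ) = 0 then 1 - p
    else if (j : ℕ) = (k : ℕ) + 1 then p
    else 0

/-- Sample and Hold (SH) matrix with parameter `p`: row `0` entries `(1−p)^k`,
`b_{jk} = p (1−p)^{k−j}` for `1 ≤ j ≤ k ≤ W`, zero otherwise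
(column `k : Fin W` is flow size `k+1`). -/
noncomputable def B_SH (W : ℕ) (p : ℝ) : Matrix (Fin (W + 1)) (Fin W) ℝ :=
  fun j k =>
    if (j : ℕ) = 0 then (1 - p) ^ ((k : ℕ) + 1)
    else if (j : ℕ) ≤ (k : ℕ) + 1 then p * (1 - p) ^ ((k : ℕ) + 1 - (j : ℕ))
    else 0


namespace St17

lemma fisherInfo_apply {W : ℕ} (B : Matrix (Fin (W + 1)) (Fin W) ℝ) (θ : Fin W → ℝ)
    (k k' : Fin W) :
    fisherInfo B θ k k' = ∑ j, B j k * ((B *ᵥ θ) j)⁻¹ * B j k' := by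
  rw [fisherInfo, Matrix.mul_assoc]
  simp [mul_apply, diagonal_apply, transpose_apply, ite_mul, mul_assoc]

section FS
variable {W : ℕ} (p : ℝ) (θ : Fin W → ℝ)

lemma bfs_mulVec_zero (hθsum : ∑ k, θ k = 1) : (B_FS W p *ᵥ θ) 0 = 1 - p := by
  simp [B_FS, mulVec, dotProduct, ← Finset.mul_sum, hθsum]

lemma bfs_mulVec_succ (i : Fin W) : (B_FS W p *ᵥ θ) i.succ = p * θ i := by
  simp only [B_FS, mulVec, dotProduct, Fin.val_succ, Nat.succ_ne_zero, if_false,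
    add_left_inj]
  rw [Finset.sum_eq_single i]
  · simp
  · intro b _ hb
    rw [if_neg (by simpa [Fin.val_injective.eq_iff] using hb.symm), zero_mul]
  · simp

lemma fs_decomp (hp0 : 0 < p) (hp1 : p < 1) (hθpos : ∀ k, 0 < θ k)
    (hθsum : ∑ k, θ k = 1) :
    fisherInfo (B_FS W p) θ =
      (1 - p)⁻¹ • vecMulVec (fun _ => 1 - p) (fun _ => 1 - p)
        + diagonal (fun k => p * (θ k)⁻¹) := by
  ext k k'
  rw [fisherInfo_apply, Fin.sum_univ_succ]
  have h0 : (B_FS W p *ᵥ θ) 0 = 1 - p := bfs_mulVec_zero p θ hθsum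
  simp only [h0, bfs_mulVec_succ p θ]
  have h1p : (1 : ℝ) - p ≠ 0 := by linarith
  simp only [B_FS, Fin.val_zero, if_true, Fin.val_succ, Nat.succ_ne_zero, if_false,
    add_left_inj, Matrix.add_apply, Matrix.smul_apply, vecMulVec_apply, diagonal_apply, smul_eq_mul]
  rw [Finset.sum_congr rfl (fun i _ => by
    rw [show (if (i : ℕ) = (k : ℕ) then p else 0) * (p * θ i)⁻¹ *
          (if (i : ℕ) = (k' : ℕ) then p else 0)
        = if i = k ∧ i = k' then p * (p * θ i)⁻¹ * p else 0 by
      rcases eq_or_ne i k with h | h <;> rcases eq_or_ne i k' with h' | h' <;>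
        simp [h, h', Fin.val_eq_val]])]
  rcases eq_or_ne k k' with h | h
  · subst h
    rw [Finset.sum_eq_single k]
    · have hθ := (hθpos k).ne'
      field_simp
      simp
    · intro b _ hb; simp [hb]
    · simp
  · rw [Finset.sum_eq_zero (by intro b _; rw [if_neg]; rintro ⟨rfl, rfl⟩; exact h rfl)]
    field_simp [if_neg h]
    simp [h]

end FS

variable {n : ℕ}

lemma vmv_mul (a b : Fin n → ℝ) (C : Matrix (Fin n) (Fin n) ℝ) :
    vecMulVec a b * C = vecMulVec a (Cᵀ *ᵥ b) := by
  ext i j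
  simp [mul_apply, vecMulVec_apply, mulVec, dotProduct, Finset.mul_sum, mul_comm, mul_assoc,
    mul_left_comm]

lemma mul_vmv (a b : Fin n → ℝ) (C : Matrix (Fin n) (Fin n) ℝ) :
    C * vecMulVec a b = vecMulVec (C *ᵥ a) b := by
  ext i j
  simp [mul_apply, vecMulVec_apply, mulVec, dotProduct, Finset.sum_mul, mul_assoc]

lemma vmv_mul_vmv (a b c d : Fin n → ℝ) :
    vecMulVec a b * vecMulVec c d = (b ⬝ᵥ c) • vecMulVec a d := by
  ext i j
  simp only [mul_apply, vecMulVec_apply, Matrix.smul_apply, dotProduct, smul_eq_mul, Finset.sum_mul]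
  exact Finset.sum_congr rfl (by intros; ring)

/-- Sherman–Morrison style right inverse. -/
lemma sm (M Minv : Matrix (Fin n) (Fin n) ℝ) (b0 : Fin n → ℝ) (d0 : ℝ)
    (h1 : M * Minv = 1) (hsym : Minvᵀ = Minv) (hd0 : d0 ≠ 0)
    (hden : d0 + b0 ⬝ᵥ (Minv *ᵥ b0) ≠ 0) :
    (d0⁻¹ • vecMulVec b0 b0 + M) *
      (Minv - (d0 + b0 ⬝ᵥ (Minv *ᵥ b0))⁻¹ • vecMulVec (Minv *ᵥ b0) (Minv *ᵥ b0)) = 1 := by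
  set v := Minv *ᵥ b0 with hv
  set β := b0 ⬝ᵥ v with hβ
  have hMv : M *ᵥ v = b0 := by
    rw [hv, mulVec_mulVec, h1, one_mulVec]
  have hbM : vecMulVec b0 b0 * Minv = vecMulVec b0 v := by
    rw [vmv_mul, hsym, hv]
  have h2 : vecMulVec b0 b0 * vecMulVec v v = β • vecMulVec b0 v := by
    rw [vmv_mul_vmv]
  rw [add_mul, mul_sub, mul_sub, smul_mul_assoc, smul_mul_assoc, hbM, h1,
    mul_smul_comm, mul_smul_comm, h2, mul_vmv, hMv]
  rw [smul_smul, smul_smul]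
  have hz : d0⁻¹ - (d0⁻¹ * (d0 + β)⁻¹ * β + (d0 + β)⁻¹) = 0 := by
    field_simp
    ring
  have : d0⁻¹ • vecMulVec b0 v - (d0⁻¹ * (d0 + β)⁻¹ * β) • vecMulVec b0 v +
      (1 - (d0 + β)⁻¹ • vecMulVec b0 v) =
      1 + (d0⁻¹ - (d0⁻¹ * (d0 + β)⁻¹ * β + (d0 + β)⁻¹)) • vecMulVec b0 v := by
    module
  rw [this, hz, zero_smul, add_zero]

section FSinv
variable {W : ℕ} (p : ℝ) (θ : Fin W → ℝ)

lemma fs_inv_diag (hp0 : 0 < p) (hp1 : p < 1) (hθpos : ∀ k, 0 < θ k)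
    (hθsum : ∑ k, θ k = 1) (j : Fin W) :
    (fisherInfo (B_FS W p) θ)⁻¹ j j = θ j * p⁻¹ - (1 - p) * θ j ^ 2 * p⁻¹ := by
  have hp : p ≠ 0 := hp0.ne'
  have h1p : (1 : ℝ) - p ≠ 0 := by linarith
  set b0 : Fin W → ℝ := fun _ => 1 - p with hb0
  set Minv : Matrix (Fin W) (Fin W) ℝ := diagonal (fun k => θ k * p⁻¹) with hMinv
  have h1 : diagonal (fun k => p * (θ k)⁻¹) * Minv = 1 := by
    rw [hMinv, diagonal_mul_diagonal]
    rw [show (fun k => p * (θ k)⁻¹ * (θ k * p⁻¹)) = fun _ => (1 : ℝ) by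
      funext k
      field_simp [(hθpos k).ne']]
    exact Matrix.diagonal_one
  have hsym : Minvᵀ = Minv := by rw [hMinv, diagonal_transpose]
  have hv : Minv *ᵥ b0 = fun k => θ k * p⁻¹ * (1 - p) := by
    funext k
    simp [hMinv, hb0, mulVec, dotProduct, diagonal_apply, ite_mul]
  have hβ : b0 ⬝ᵥ (Minv *ᵥ b0) = (1 - p) ^ 2 * p⁻¹ := by
    rw [hv, hb0]
    simp only [dotProduct]
    calc ∑ x : Fin W, (1 - p) * (θ x * p⁻¹ * (1 - p))
        = ∑ x : Fin W, ((1 - p) ^ 2 * p⁻¹) * θ x :=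
          Finset.sum_congr rfl (fun k _ => by ring)
      _ = (1 - p) ^ 2 * p⁻¹ := by rw [← Finset.mul_sum, hθsum, mul_one]
  have hden : (1 - p) + b0 ⬝ᵥ (Minv *ᵥ b0) ≠ 0 := by
    rw [hβ]
    have h2 : (0:ℝ) ≤ (1 - p) ^ 2 * p⁻¹ := by positivity
    have h3 : (0:ℝ) < 1 - p := by linarith
    linarith
  have hinv : (fisherInfo (B_FS W p) θ)⁻¹ =
      Minv - ((1 - p) + b0 ⬝ᵥ (Minv *ᵥ b0))⁻¹ • vecMulVec (Minv *ᵥ b0) (Minv *ᵥ b0) := by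
    apply inv_eq_right_inv
    rw [fs_decomp p θ hp0 hp1 hθpos hθsum]
    exact sm _ Minv b0 (1 - p) h1 hsym h1p hden
  have hd : (1 - p) + (1 - p) ^ 2 * p⁻¹ ≠ 0 := by rw [hβ] at hden; exact hden
  rw [hinv, Matrix.sub_apply, Matrix.smul_apply, vecMulVec_apply, hβ, hv]
  simp only [smul_eq_mul, hMinv, diagonal_apply_eq]
  have hc : 1 - p + (1 - p) ^ 2 * p⁻¹ = (1 - p) * p⁻¹ := by field_simp; ring
  rw [hc, mul_inv, inv_inv]
  field_simp

end FSinv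

section SH
variable (V : ℕ) (q : ℝ) (θ : Fin (V + 2) → ℝ)

/-- tail sum `s_k = ∑_{i ≥ k} θ_i (1-q)^{i-k}`. -/
noncomputable def sS (k : Fin (V + 2)) : ℝ :=
  ∑ i : Fin (V + 2), if (k : ℕ) ≤ (i : ℕ) then θ i * (1 - q) ^ ((i : ℕ) - (k : ℕ)) else 0

noncomputable def Bt : Matrix (Fin (V + 2)) (Fin (V + 2)) ℝ :=
  fun k k' => if (k : ℕ) ≤ (k' : ℕ) then q * (1 - q) ^ ((k' : ℕ) - (k : ℕ)) else 0

noncomputable def Lm : Matrix (Fin (V + 2)) (Fin (V + 2)) ℝ :=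
  fun k m => q⁻¹ * ((if k = m then 1 else 0)
    - (1 - q) * (if (m : ℕ) = (k : ℕ) + 1 then 1 else 0))

variable {V q θ}

lemma theta_le_sS (hq1 : q < 1) (hθpos : ∀ k, 0 < θ k) (k : Fin (V + 2)) :
    θ k ≤ sS V q θ k := by
  have hr : (0:ℝ) ≤ 1 - q := by linarith
  have : θ k = (if (k : ℕ) ≤ (k : ℕ) then θ k * (1 - q) ^ ((k : ℕ) - (k : ℕ)) else 0) := by
    simp
  rw [this, sS]
  apply Finset.single_le_sum (f := fun i : Fin (V + 2) =>
    if (k : ℕ) ≤ (i : ℕ) then θ i * (1 - q) ^ ((i : ℕ) - (k : ℕ)) else 0)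
  · intro i _
    split_ifs
    · exact mul_nonneg (hθpos i).le (by positivity)
    · exact le_rfl
  · exact Finset.mem_univ k

lemma sS_pos (hq1 : q < 1) (hθpos : ∀ k, 0 < θ k) (k : Fin (V + 2)) :
    0 < sS V q θ k :=
  lt_of_lt_of_le (hθpos k) (theta_le_sS hq1 hθpos k)

lemma sS_one_eq : sS V q θ 1 = ∑ i : Fin (V + 1), θ i.succ * (1 - q) ^ (i : ℕ) := by
  rw [sS, Fin.sum_univ_succ, if_neg (by simp), zero_add]
  exact Finset.sum_congr rfl (fun i _ => by
    rw [if_pos (by simp [Fin.val_succ])]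
    simp [Fin.val_succ])

lemma sS_zero_eq : sS V q θ 0 = θ 0 + (1 - q) * sS V q θ 1 := by
  rw [sS, Fin.sum_univ_succ, sS_one_eq, Finset.mul_sum]
  simp only [Fin.val_zero, Nat.zero_le, if_true, Nat.sub_zero, pow_zero, mul_one, Fin.val_succ]
  congr 1
  exact Finset.sum_congr rfl (fun i _ => by rw [pow_succ]; ring)

lemma sS_one_ge (hq0 : 0 < q) (hq1 : q < 1) (hθpos : ∀ k, 0 < θ k)
    (hθsum : ∑ k, θ k = 1) :
    (1 - q) ^ V * (1 - θ 0) ≤ sS V q θ 1 := by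
  have hr0 : (0:ℝ) ≤ 1 - q := by linarith
  have hr1 : 1 - q ≤ 1 := by linarith
  have htail : ∑ i : Fin (V + 1), θ i.succ = 1 - θ 0 := by
    rw [Fin.sum_univ_succ] at hθsum
    linarith
  rw [sS_one_eq, ← htail, Finset.mul_sum]
  apply Finset.sum_le_sum
  intro i _
  rw [mul_comm ((1-q)^V)]
  exact mul_le_mul_of_nonneg_left
    (pow_le_pow_of_le_one hr0 hr1 (Nat.lt_succ_iff.mp i.isLt)) (hθpos i.succ).le

lemma bsh_mulVec_zero : (B_SH (V + 2) q *ᵥ θ) 0 = (1 - q) * sS V q θ 0 := by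
  simp only [B_SH, mulVec, dotProduct, Fin.val_zero, if_true, sS, Finset.mul_sum]
  exact Finset.sum_congr rfl (fun k _ => by
    simp only [Fin.val_zero, Nat.zero_le, if_true, Nat.sub_zero]
    rw [pow_succ]; ring)

lemma bsh_eq_Bt (i k : Fin (V + 2)) : B_SH (V + 2) q i.succ k = Bt V q i k := by
  simp only [B_SH, Bt, Fin.val_succ, Nat.succ_ne_zero, if_false, Nat.add_le_add_iff_right,
    Nat.succ_sub_succ]

lemma bsh_mulVec_succ (i : Fin (V + 2)) :
    (B_SH (V + 2) q *ᵥ θ) i.succ = q * sS V q θ i := by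
  simp only [mulVec, dotProduct, sS, Finset.mul_sum]
  refine Finset.sum_congr rfl (fun k _ => ?_)
  rw [bsh_eq_Bt]
  simp only [Bt]
  split_ifs
  · ring
  · simp

lemma triple_apply {n : ℕ} (A : Matrix (Fin n) (Fin n) ℝ) (f : Fin n → ℝ) (k k' : Fin n) :
    (Aᵀ * diagonal f * A) k k' = ∑ i, A i k * f i * A i k' := by
  rw [Matrix.mul_assoc]
  simp [mul_apply, diagonal_apply, transpose_apply, ite_mul, mul_assoc]

lemma sh_decomp (hq0 : 0 < q) (hq1 : q < 1) (hθpos : ∀ k, 0 < θ k) :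
    fisherInfo (B_SH (V + 2) q) θ =
      ((1 - q) * sS V q θ 0)⁻¹ •
          vecMulVec (fun k : Fin (V+2) => (1 - q) ^ ((k : ℕ) + 1))
            (fun k : Fin (V+2) => (1 - q) ^ ((k : ℕ) + 1))
        + (Bt V q)ᵀ * diagonal (fun i => (q * sS V q θ i)⁻¹) * Bt V q := by
  ext k k'
  rw [fisherInfo_apply, Fin.sum_univ_succ, Matrix.add_apply, Matrix.smul_apply, vecMulVec_apply,
    triple_apply, bsh_mulVec_zero]
  congr 1
  · simp only [B_SH, Fin.val_zero, if_true, smul_eq_mul]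
    ring
  · exact Finset.sum_congr rfl (fun i _ => by rw [bsh_eq_Bt, bsh_eq_Bt, bsh_mulVec_succ])

end SH

section SH2
variable {V : ℕ} {q : ℝ} {θ : Fin (V + 2) → ℝ}

lemma hBL (hq0 : 0 < q) : Bt V q * Lm V q = 1 := by
  have hq : q ≠ 0 := hq0.ne'
  ext k k''
  rw [mul_apply]
  have hterm : ∀ m : Fin (V + 2), Bt V q k m * Lm V q m k''
      = q⁻¹ * (Bt V q k m * (if m = k'' then 1 else 0))
        - q⁻¹ * (1 - q) * (Bt V q k m * (if (k'' : ℕ) = (m : ℕ) + 1 then 1 else 0)) := by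
    intro m
    simp only [Lm]
    ring
  rw [Finset.sum_congr rfl (fun m _ => hterm m), Finset.sum_sub_distrib, ← Finset.mul_sum,
    ← Finset.mul_sum]
  have h1 : ∑ m : Fin (V + 2), Bt V q k m * (if m = k'' then 1 else 0) = Bt V q k k'' := by
    rw [Finset.sum_eq_single k'' (fun b _ hb => by rw [if_neg hb, mul_zero])
      (fun h => absurd (Finset.mem_univ k'') h)]
    rw [if_pos rfl, mul_one]
  rw [h1]
  rcases Fin.eq_zero_or_eq_succ k'' with rfl | ⟨t, rfl⟩
  · have h2 : ∑ m : Fin (V + 2), Bt V q k m * (if ((0:Fin (V+2)) : ℕ) = (m : ℕ) + 1 then 1 else 0) = 0 :=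
      Finset.sum_eq_zero (fun m _ => by rw [if_neg (by simp), mul_zero])
    rw [h2, mul_zero, sub_zero, one_apply, Bt]
    rcases eq_or_ne k 0 with rfl | hk
    · rw [if_pos rfl, if_pos (le_refl _)]
      simp [hq]
    · rw [if_neg hk, if_neg (by intro h; apply hk; ext; simp only [Fin.val_zero] at h ⊢; omega), mul_zero]
  · have h2 : ∑ m : Fin (V + 2), Bt V q k m * (if ((t.succ : Fin (V+2)) : ℕ) = (m : ℕ) + 1 then 1 else 0)
        = Bt V q k t.castSucc := by
      rw [Finset.sum_eq_single t.castSucc (fun b _ hb => by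
          rw [if_neg (by simpa [Fin.val_succ, Fin.ext_iff, Fin.coe_castSucc, eq_comm] using hb), mul_zero])
        (fun h => absurd (Finset.mem_univ _) h)]
      rw [if_pos (by simp [Fin.val_succ, Fin.coe_castSucc]), mul_one]
    rw [h2, one_apply, Bt, Bt]
    simp only [Fin.coe_castSucc, Fin.val_succ]
    rcases lt_trichotomy (k : ℕ) ((t : ℕ) + 1) with hlt | heq | hgt
    · have hk_le_t : (k : ℕ) ≤ (t : ℕ) := by omega
      rw [if_pos (by omega), if_pos hk_le_t,
        if_neg (by simp [Fin.ext_iff, Fin.val_succ]; omega)]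
      have : (t : ℕ) + 1 - (k : ℕ) = ((t : ℕ) - (k : ℕ)) + 1 := by omega
      rw [this, pow_succ]
      ring
    · rw [if_pos (by omega), if_neg (by omega), if_pos (by simp [Fin.ext_iff, Fin.val_succ]; omega)]
      have : (t : ℕ) + 1 - (k : ℕ) = 0 := by omega
      rw [this, pow_zero, mul_one, mul_zero, sub_zero]
      field_simp
    · rw [if_neg (by omega), if_neg (by omega),
        if_neg (by simp [Fin.ext_iff, Fin.val_succ]; omega)]
      ring

end SH2

section SH3
variable {V : ℕ} {q : ℝ} {θ : Fin (V + 2) → ℝ}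

lemma hMMinv (hq0 : 0 < q) (hq1 : q < 1) (hθpos : ∀ k, 0 < θ k) :
    ((Bt V q)ᵀ * diagonal (fun i => (q * sS V q θ i)⁻¹) * Bt V q) *
      (Lm V q * diagonal (fun i => q * sS V q θ i) * (Lm V q)ᵀ) = 1 := by
  have hLB : Lm V q * Bt V q = 1 := (mul_eq_one_comm).mp (hBL hq0)
  have hDD : diagonal (fun i : Fin (V+2) => (q * sS V q θ i)⁻¹) *
      diagonal (fun i => q * sS V q θ i) = 1 := by
    rw [diagonal_mul_diagonal]
    rw [show (fun i : Fin (V+2) => (q * sS V q θ i)⁻¹ * (q * sS V q θ i)) = fun _ => (1:ℝ) by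
      funext i
      exact inv_mul_cancel₀ (mul_pos hq0 (sS_pos hq1 hθpos i)).ne']
    exact Matrix.diagonal_one
  calc ((Bt V q)ᵀ * diagonal (fun i => (q * sS V q θ i)⁻¹) * Bt V q) *
      (Lm V q * diagonal (fun i => q * sS V q θ i) * (Lm V q)ᵀ)
      = (Bt V q)ᵀ * (diagonal (fun i => (q * sS V q θ i)⁻¹) * ((Bt V q * Lm V q) *
          (diagonal (fun i => q * sS V q θ i) * (Lm V q)ᵀ))) := by
        simp only [Matrix.mul_assoc]
    _ = (Bt V q)ᵀ * ((diagonal (fun i => (q * sS V q θ i)⁻¹) *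
          diagonal (fun i => q * sS V q θ i)) * (Lm V q)ᵀ) := by
        rw [hBL hq0, Matrix.one_mul, Matrix.mul_assoc]
    _ = (Bt V q)ᵀ * (Lm V q)ᵀ := by rw [hDD, Matrix.one_mul]
    _ = 1 := by rw [← Matrix.transpose_mul, hLB, Matrix.transpose_one]

lemma hMinv_symm :
    (Lm V q * diagonal (fun i => q * sS V q θ i) * (Lm V q)ᵀ)ᵀ
      = Lm V q * diagonal (fun i => q * sS V q θ i) * (Lm V q)ᵀ := by
  rw [Matrix.transpose_mul, Matrix.transpose_mul, Matrix.transpose_transpose,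
    diagonal_transpose, Matrix.mul_assoc]

lemma hv_sh (hq0 : 0 < q) :
    (Lm V q * diagonal (fun i => q * sS V q θ i) * (Lm V q)ᵀ) *ᵥ
        (fun k : Fin (V+2) => (1 - q) ^ ((k : ℕ) + 1))
      = fun k => if k = 0 then (1 - q) * sS V q θ 0 * q⁻¹ else 0 := by
  have hq : q ≠ 0 := hq0.ne'
  have hb0 : (fun k : Fin (V+2) => (1 - q) ^ ((k : ℕ) + 1))
      = ((1 - q) * q⁻¹) • ((Bt V q)ᵀ *ᵥ Pi.single 0 1) := by
    funext k
    have : ((Bt V q)ᵀ *ᵥ Pi.single 0 1) k = Bt V q 0 k := by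
      simp [mulVec, dotProduct, Pi.single_apply, transpose_apply]
    rw [Pi.smul_apply, this]
    simp only [Bt, Fin.val_zero, Nat.zero_le, if_true, Nat.sub_zero, smul_eq_mul]
    rw [pow_succ]
    field_simp
  rw [hb0, mulVec_smul, mulVec_mulVec]
  have hMB : Lm V q * diagonal (fun i => q * sS V q θ i) * (Lm V q)ᵀ * (Bt V q)ᵀ
      = Lm V q * diagonal (fun i => q * sS V q θ i) := by
    rw [Matrix.mul_assoc, ← Matrix.transpose_mul, hBL hq0, Matrix.transpose_one, Matrix.mul_one]
  rw [hMB]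
  funext k
  simp only [Pi.smul_apply, mulVec_single_one, Matrix.col_apply, mul_diagonal, mul_one, smul_eq_mul, Lm,
    Fin.val_zero]
  rcases eq_or_ne k 0 with rfl | hk
  · simp
    field_simp
  · simp [hk]

lemma Minv_diag (j : Fin (V + 2)) :
    (Lm V q * diagonal (fun i => q * sS V q θ i) * (Lm V q)ᵀ) j j
      = ∑ m : Fin (V+2), Lm V q j m * (q * sS V q θ m) * Lm V q j m := by
  rw [mul_apply]
  exact Finset.sum_congr rfl (fun m _ => by rw [mul_diagonal, transpose_apply])

lemma Minv_diag_ge (hq0 : 0 < q) (hq1 : q < 1) (hθpos : ∀ k, 0 < θ k) (j : Fin (V + 2)) :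
    sS V q θ j * q⁻¹
      ≤ (Lm V q * diagonal (fun i => q * sS V q θ i) * (Lm V q)ᵀ) j j := by
  have hq : q ≠ 0 := hq0.ne'
  rw [Minv_diag]
  have hjj : Lm V q j j * (q * sS V q θ j) * Lm V q j j = sS V q θ j * q⁻¹ := by
    simp only [Lm, if_pos rfl, if_neg (show ¬((j:ℕ) = (j:ℕ)+1) by omega), mul_zero, sub_zero,
      mul_one, eq_self_iff_true, if_true]
    field_simp
  rw [← hjj]
  apply Finset.single_le_sum (f := fun m => Lm V q j m * (q * sS V q θ m) * Lm V q j m)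
    (fun m _ => ?_) (Finset.mem_univ j)
  show 0 ≤ Lm V q j m * (q * sS V q θ m) * Lm V q j m
  have h1 : Lm V q j m * (q * sS V q θ m) * Lm V q j m
      = (q * sS V q θ m) * (Lm V q j m) ^ 2 := by ring
  rw [h1]
  have := (sS_pos hq1 hθpos m).le
  positivity

lemma Minv_diag_zero (hq0 : 0 < q) :
    (Lm V q * diagonal (fun i => q * sS V q θ i) * (Lm V q)ᵀ) 0 0
      = (sS V q θ 0 + (1 - q) ^ 2 * sS V q θ 1) * q⁻¹ := by
  have hq : q ≠ 0 := hq0.ne'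
  rw [Minv_diag, Fin.sum_univ_succ, Fin.sum_univ_succ]
  have e0 : Lm V q 0 0 = q⁻¹ := by
    simp [Lm]
  have e1 : Lm V q 0 ((0 : Fin (V+1)).succ) = -((1 - q) * q⁻¹) := by
    simp only [Lm, Fin.val_succ, Fin.val_zero]
    rw [if_neg (by simp [Fin.ext_iff])]
    norm_num
    ring
  have ez : ∀ m : Fin V, Lm V q 0 (m.succ.succ) = 0 := by
    intro m
    simp only [Lm, Fin.val_succ, Fin.val_zero]
    rw [if_neg (by simp [Fin.ext_iff])]
    simp
  rw [Finset.sum_eq_zero (fun m _ => by rw [ez m]; ring), e0, e1, add_zero,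
    Fin.succ_zero_eq_one]
  field_simp

end SH3

section SH4
variable {V : ℕ} {q : ℝ} {θ : Fin (V + 2) → ℝ}

lemma hdot_sh (hq0 : 0 < q) :
    (fun k : Fin (V+2) => (1 - q) ^ ((k : ℕ) + 1)) ⬝ᵥ
        (fun k : Fin (V+2) => if k = 0 then (1 - q) * sS V q θ 0 * q⁻¹ else 0)
      = (1 - q) * ((1 - q) * sS V q θ 0 * q⁻¹) := by
  rw [dotProduct, Finset.sum_eq_single (0 : Fin (V+2))
    (fun b _ hb => by rw [if_neg hb, mul_zero])
    (fun h => absurd (Finset.mem_univ _) h)]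
  rw [if_pos rfl]
  norm_num

lemma sh_inv (hq0 : 0 < q) (hq1 : q < 1) (hθpos : ∀ k, 0 < θ k) :
    (fisherInfo (B_SH (V + 2) q) θ)⁻¹
      = Lm V q * diagonal (fun i => q * sS V q θ i) * (Lm V q)ᵀ
        - ((1 - q) * sS V q θ 0 + (1 - q) * ((1 - q) * sS V q θ 0 * q⁻¹))⁻¹ •
          vecMulVec (fun k : Fin (V+2) => if k = 0 then (1 - q) * sS V q θ 0 * q⁻¹ else 0)
            (fun k : Fin (V+2) => if k = 0 then (1 - q) * sS V q θ 0 * q⁻¹ else 0) := by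
  have hq : q ≠ 0 := hq0.ne'
  have hr : 0 < 1 - q := by linarith
  have hs0 : 0 < sS V q θ 0 := sS_pos hq1 hθpos 0
  have hd0 : (1 - q) * sS V q θ 0 ≠ 0 := by positivity
  set b0 : Fin (V+2) → ℝ := fun k => (1 - q) ^ ((k : ℕ) + 1) with hb0def
  set Minv := Lm V q * diagonal (fun i => q * sS V q θ i) * (Lm V q)ᵀ with hMinvdef
  have hvv := hv_sh (θ := θ) hq0
  have hden : (1 - q) * sS V q θ 0 + b0 ⬝ᵥ (Minv *ᵥ b0) ≠ 0 := by
    rw [hMinvdef, hvv, hdot_sh hq0]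
    have : (0:ℝ) < (1 - q) * sS V q θ 0 + (1 - q) * ((1 - q) * sS V q θ 0 * q⁻¹) := by
      positivity
    linarith
  have h := sm ((Bt V q)ᵀ * diagonal (fun i => (q * sS V q θ i)⁻¹) * Bt V q) Minv b0
    ((1 - q) * sS V q θ 0) (hMMinv hq0 hq1 hθpos) hMinv_symm hd0 hden
  have hinv : (fisherInfo (B_SH (V + 2) q) θ)⁻¹
      = Minv - ((1 - q) * sS V q θ 0 + b0 ⬝ᵥ (Minv *ᵥ b0))⁻¹ •
          vecMulVec (Minv *ᵥ b0) (Minv *ᵥ b0) := by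
    apply inv_eq_right_inv
    rw [sh_decomp hq0 hq1 hθpos]
    exact h
  rw [hinv, hMinvdef, hvv, hdot_sh hq0]

lemma sh_inv_diag_ge (hq0 : 0 < q) (hq1 : q < 1) (hθpos : ∀ k, 0 < θ k)
    (j : Fin (V + 2)) (hj : j ≠ 0) :
    sS V q θ j * q⁻¹ ≤ (fisherInfo (B_SH (V + 2) q) θ)⁻¹ j j := by
  rw [sh_inv hq0 hq1 hθpos, Matrix.sub_apply, Matrix.smul_apply, vecMulVec_apply, if_neg hj]
  simp only [mul_zero, zero_mul, smul_eq_mul, sub_zero]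
  exact Minv_diag_ge hq0 hq1 hθpos j

lemma sh_inv_diag_zero (hq0 : 0 < q) (hq1 : q < 1) (hθpos : ∀ k, 0 < θ k) :
    (fisherInfo (B_SH (V + 2) q) θ)⁻¹ 0 0
      = θ 0 + (1 - q) * sS V q θ 1 * q⁻¹ := by
  have hq : q ≠ 0 := hq0.ne'
  have hr : 0 < 1 - q := by linarith
  have hs1 : 0 < sS V q θ 1 := sS_pos hq1 hθpos 1
  have hs0 : 0 < sS V q θ 0 := sS_pos hq1 hθpos 0
  rw [sh_inv hq0 hq1 hθpos, Matrix.sub_apply, Matrix.smul_apply, vecMulVec_apply, if_pos rfl,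
    Minv_diag_zero hq0, smul_eq_mul]
  have hde : (1 - q) * sS V q θ 0 + (1 - q) * ((1 - q) * sS V q θ 0 * q⁻¹)
      = (1 - q) * sS V q θ 0 * q⁻¹ := by
    field_simp
    ring
  have hx : (1 - q) * sS V q θ 0 * q⁻¹ ≠ 0 := by positivity
  rw [hde, ← mul_assoc, inv_mul_cancel₀ hx, one_mul, sS_zero_eq]
  field_simp
  ring

end SH4

end St17

/-- For `0 < p_p ≤ p < 1`:
(a) for `2 ≤ j ≤ W`, `(J_FS(p)⁻¹)_{jj} ≤ (J_SH(p_p)⁻¹)_{jj}`;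
(b) if `W = 2`, or `W > 2` and `θ₂ ≥ θ₁(1−θ₁)`, the same holds at `j = 1`;
(c) for any `θ` there is `p₀ ∈ (0,1)` such that the `j = 1` comparison holds whenever
`0 < p_p ≤ p ≤ p₀`. Lean index `j : Fin W` corresponds to size `j+1`. -/
theorem stmt_17 (W : ℕ) (hW : 2 ≤ W)
    (θ : Fin W → ℝ) (hθpos : ∀ k, 0 < θ k) (hθsum : ∑ k, θ k = 1)
    (p pp : ℝ) (hpp0 : 0 < pp) (hppp : pp ≤ p) (hp1 : p < 1) :
    (∀ j : Fin W, 1 ≤ (j : ℕ) →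
      (fisherInfo (B_FS W p) θ)⁻¹ j j ≤ (fisherInfo (B_SH W pp) θ)⁻¹ j j) ∧
    ((W = 2 ∨ (2 < W ∧ θ ⟨0, by omega⟩ * (1 - θ ⟨0, by omega⟩) ≤ θ ⟨1, by omega⟩)) →
      (fisherInfo (B_FS W p) θ)⁻¹ ⟨0, by omega⟩ ⟨0, by omega⟩ ≤
        (fisherInfo (B_SH W pp) θ)⁻¹ ⟨0, by omega⟩ ⟨0, by omega⟩) ∧
    (∃ p₀ ∈ Set.Ioo (0 : ℝ) 1, ∀ p' pp' : ℝ, 0 < pp' → pp' ≤ p' → p' ≤ p₀ →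
      (fisherInfo (B_FS W p') θ)⁻¹ ⟨0, by omega⟩ ⟨0, by omega⟩ ≤
        (fisherInfo (B_SH W pp') θ)⁻¹ ⟨0, by omega⟩ ⟨0, by omega⟩) := by
  obtain ⟨V, rfl⟩ : ∃ V, W = V + 2 := ⟨W - 2, by omega⟩
  simp only [Fin.mk_zero, Fin.mk_one]
  have hθle1 : ∀ k, θ k ≤ 1 := by
    intro k
    have h := Finset.single_le_sum (f := θ) (fun i _ => (hθpos i).le) (Finset.mem_univ k)
    rw [hθsum] at h
    exact h
  have hθ0lt1 : θ 0 < 1 := by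
    have hs := hθsum
    rw [Fin.sum_univ_succ, Fin.sum_univ_succ] at hs
    have h1 : (0:ℝ) ≤ ∑ i : Fin V, θ i.succ.succ :=
      Finset.sum_nonneg (fun i _ => (hθpos _).le)
    have h2 := hθpos ((0 : Fin (V + 1)).succ)
    linarith
  -- part (a) core
  have key_a : ∀ (p' q' : ℝ), 0 < q' → q' ≤ p' → p' < 1 → ∀ j : Fin (V + 2), j ≠ 0 →
      (fisherInfo (B_FS (V + 2) p') θ)⁻¹ j j ≤ (fisherInfo (B_SH (V + 2) q') θ)⁻¹ j j := by
    intro p' q' hq0 hqp hp1' j hj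
    have hp0' : 0 < p' := lt_of_lt_of_le hq0 hqp
    have hq1' : q' < 1 := lt_of_le_of_lt hqp hp1'
    rw [St17.fs_inv_diag p' θ hp0' hp1' hθpos hθsum j]
    refine le_trans ?_ (St17.sh_inv_diag_ge hq0 hq1' hθpos j hj)
    have h1 : θ j ≤ St17.sS V q' θ j := St17.theta_le_sS hq1' hθpos j
    have h2 : (0:ℝ) ≤ (1 - p') * θ j ^ 2 * p'⁻¹ :=
      mul_nonneg (mul_nonneg (by linarith) (sq_nonneg _)) (inv_nonneg.mpr hp0'.le)
    have h3 : θ j * p'⁻¹ ≤ θ j * q'⁻¹ :=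
      mul_le_mul_of_nonneg_left (inv_anti₀ hq0 hqp) (hθpos j).le
    have h4 : θ j * q'⁻¹ ≤ St17.sS V q' θ j * q'⁻¹ :=
      mul_le_mul_of_nonneg_right h1 (inv_nonneg.mpr hq0.le)
    linarith
  -- part (b)/(c) core
  have key_0 : ∀ (p' q' : ℝ), 0 < q' → q' ≤ p' → p' < 1 →
      θ 0 * (1 - θ 0) ≤ St17.sS V q' θ 1 →
      (fisherInfo (B_FS (V + 2) p') θ)⁻¹ 0 0 ≤ (fisherInfo (B_SH (V + 2) q') θ)⁻¹ 0 0 := by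
    intro p' q' hq0 hqp hp1' hcond
    have hp0' : 0 < p' := lt_of_lt_of_le hq0 hqp
    have hq1' : q' < 1 := lt_of_le_of_lt hqp hp1'
    rw [St17.fs_inv_diag p' θ hp0' hp1' hθpos hθsum 0,
      St17.sh_inv_diag_zero hq0 hq1' hθpos]
    have e1 : θ 0 * p'⁻¹ - (1 - p') * θ 0 ^ 2 * p'⁻¹
        = θ 0 + (1 - p') * p'⁻¹ * (θ 0 * (1 - θ 0)) := by
      field_simp
      ring
    rw [e1]
    have h2 : (1 - p') * p'⁻¹ ≤ (1 - q') * q'⁻¹ := by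
      rw [← div_eq_mul_inv, ← div_eq_mul_inv, div_le_div_iff₀ hp0' hq0]
      nlinarith
    have h3 : (0:ℝ) ≤ θ 0 * (1 - θ 0) := mul_nonneg (hθpos 0).le (by linarith [hθle1 0])
    have h4 : (1 - p') * p'⁻¹ * (θ 0 * (1 - θ 0)) ≤ (1 - q') * q'⁻¹ * St17.sS V q' θ 1 :=
      mul_le_mul h2 hcond h3 (mul_nonneg (by linarith) (inv_nonneg.mpr hq0.le))
    have h5 : (1 - q') * q'⁻¹ * St17.sS V q' θ 1 = (1 - q') * St17.sS V q' θ 1 * q'⁻¹ := by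
      ring
    linarith
  have hp0 : 0 < p := lt_of_lt_of_le hpp0 hppp
  have hpp1 : pp < 1 := lt_of_le_of_lt hppp hp1
  refine ⟨?_, ?_, ?_⟩
  · intro j hj
    exact key_a p pp hpp0 hppp hp1 j (by
      intro h
      rw [h] at hj
      simp at hj)
  · intro hb
    have hθ1 : θ 0 * (1 - θ 0) ≤ θ 1 := by
      rcases hb with h2 | ⟨_, h4⟩
      · obtain rfl : V = 0 := by omega
        rw [Fin.sum_univ_two] at hθsum
        nlinarith [hθpos 0, hθle1 0]
      · exact h4
    exact key_0 p pp hpp0 hppp hp1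
      (le_trans hθ1 (St17.theta_le_sS hpp1 hθpos 1))
  · have hθ00 := hθpos 0
    set c := θ 0 ^ (((V : ℝ) + 1)⁻¹) with hc
    have hcpos : 0 < c := Real.rpow_pos_of_pos hθ00 _
    have hclt1 : c < 1 := Real.rpow_lt_one hθ00.le hθ0lt1 (by positivity)
    refine ⟨1 - c, ⟨by linarith, by linarith⟩, fun p' q' hq0 hqp hple => ?_⟩
    have hp1' : p' < 1 := lt_of_le_of_lt hple (by linarith)
    have hq1' : q' < 1 := lt_of_le_of_lt hqp hp1'
    apply key_0 p' q' hq0 hqp hp1'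
    have hr' : c ≤ 1 - q' := by linarith
    have h5 : c ^ V ≤ (1 - q') ^ V := pow_le_pow_left₀ hcpos.le hr' V
    have h6 : θ 0 ≤ c ^ V := by
      have hexp : (((V : ℝ) + 1)⁻¹ * (V : ℕ) : ℝ) ≤ 1 := by
        rw [← div_eq_inv_mul]
        exact div_le_one_of_le₀ (by push_cast; linarith) (by positivity)
      calc θ 0 = θ 0 ^ (1 : ℝ) := (Real.rpow_one _).symm
        _ ≤ θ 0 ^ ((((V : ℝ) + 1)⁻¹ * (V : ℕ)) : ℝ) :=
            Real.rpow_le_rpow_of_exponent_ge hθ00 (hθle1 0) hexp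
        _ = (θ 0 ^ (((V : ℝ) + 1)⁻¹)) ^ ((V : ℕ) : ℝ) := by
            rw [← Real.rpow_mul hθ00.le]
        _ = c ^ V := by rw [Real.rpow_natCast]
    have hss := St17.sS_one_ge hq0 hq1' hθpos hθsum
    have h7 : θ 0 * (1 - θ 0) ≤ (1 - q') ^ V * (1 - θ 0) :=
      mul_le_mul_of_nonneg_right (le_trans h6 h5) (by linarith [hθle1 0])
    linarith
end
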